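/- arXiv:1505.00370 — 12 statements merged into one kernel-verified Lean document; each statement's English description precedes it below -/
import Mathlib

section
/- Let u₁, …, u_m ∈ ℝⁿ be linearly independent. Then the DEIM greedy algorithm applied to u₁, …, u_m is well defined: for every j = 2, …, m, the (j−1)×(j−1) matrix S_{j−1}ᵀU_{j−1} appearing at step j is invertible, and the residual r_j = u_j − U_{j−1}(S_{j−1}ᵀU_{j−1})⁻¹S_{j−1}ᵀu_j is a nonzero vector; consequently the m selected indices p₁, …, p_m are pairwise distinct. -/
open Matrix

/-- Spectral norm: operator norm induced by the Euclidean vector norm. -/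
noncomputable def specNorm {𝕜 : Type*} [RCLike 𝕜] {a b : ℕ} (A : Matrix (Fin a) (Fin b) 𝕜) : ℝ :=
  ‖LinearMap.toContinuousLinearMap (Matrix.toEuclideanLin A)‖

/-- The least index maximizing `|v i|`. -/
noncomputable def argmaxAbs {n : ℕ} [NeZero n] (v : Fin n → ℝ) : Fin n :=
  (Finset.univ.filter fun i => ∀ j, |v j| ≤ |v i|).min' (by
    obtain ⟨i, hi⟩ := Finite.exists_max fun i => |v i|
    exact ⟨i, Finset.mem_filter.mpr ⟨Finset.mem_univ i, hi⟩⟩)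

/-- The DEIM greedy index selection applied to the vectors `u 0, u 1, …` :
`deimP u j` is the index selected at (0-based) step `j`, namely the least index
maximizing the absolute value of the residual
`r_j = u_j − U_{j-1} z` where `S_{j-1}ᵀU_{j-1} z = S_{j-1}ᵀu_j`. -/
noncomputable def deimP {n : ℕ} [NeZero n] (u : ℕ → Fin n → ℝ) : ℕ → Fin n
  | j =>
    argmaxAbs fun a => u j a - ∑ l : Fin j,
      u l.val a *
        ((Matrix.of fun i k : Fin j => u k.val (deimP u i.val))⁻¹.mulVec
          fun i : Fin j => u j (deimP u i.val)) l
termination_by j => j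
decreasing_by all_goals exact i.isLt

/-- The DEIM residual `r_j = u_j − U_{j-1}(S_{j-1}ᵀU_{j-1})⁻¹S_{j-1}ᵀu_j`
at (0-based) step `j`. -/
noncomputable def deimRes {n : ℕ} [NeZero n] (u : ℕ → Fin n → ℝ) (j : ℕ) : Fin n → ℝ :=
  fun a => u j a - ∑ l : Fin j,
    u l.val a *
      ((Matrix.of fun i k : Fin j => u k.val (deimP u i.val))⁻¹.mulVec
        fun i : Fin j => u j (deimP u i.val)) l
lemma abs_le_abs_argmaxAbs {n : ℕ} [NeZero n] (v : Fin n → ℝ) (j : Fin n) :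
    |v j| ≤ |v (argmaxAbs v)| := by
  have h : argmaxAbs v ∈ Finset.univ.filter fun i => ∀ j, |v j| ≤ |v i| :=
    Finset.min'_mem _ _
  exact (Finset.mem_filter.mp h).2 j

lemma deimP_eq_argmax {n : ℕ} [NeZero n] (u : ℕ → Fin n → ℝ) (j : ℕ) :
    deimP u j = argmaxAbs (deimRes u j) := by
  rw [deimP]
  rfl

section Aux
variable {n m : ℕ} [NeZero n] (u : Fin m → Fin n → ℝ)

/-- extension of `u` by zero -/
noncomputable def Uext : ℕ → Fin n → ℝ := fun j a => if h : j < m then u ⟨j, h⟩ a else 0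

/-- the selected submatrix at step j -/
noncomputable def Mmat (j : ℕ) : Matrix (Fin j) (Fin j) ℝ :=
  Matrix.of fun i k : Fin j => Uext u k.val (deimP (Uext u) i.val)

/-- the coefficient vector at step j -/
noncomputable def Zvec (j : ℕ) : Fin j → ℝ :=
  (Mmat u j)⁻¹.mulVec fun i : Fin j => Uext u j (deimP (Uext u) i.val)

lemma res_eq (j : ℕ) (a : Fin n) :
    deimRes (Uext u) j a = Uext u j a - ∑ l : Fin j, Uext u l.val a * Zvec u j l := rfl

lemma mulVec_z (j : ℕ) (h : IsUnit (Mmat u j)) :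
    (Mmat u j).mulVec (Zvec u j) = fun i : Fin j => Uext u j (deimP (Uext u) i.val) := by
  have hd : IsUnit (Mmat u j).det := (Matrix.isUnit_iff_isUnit_det _).mp h
  unfold Zvec
  rw [Matrix.mulVec_mulVec, Matrix.mul_nonsing_inv _ hd, Matrix.one_mulVec]

lemma sum_z (j : ℕ) (h : IsUnit (Mmat u j)) (i : Fin j) :
    ∑ l : Fin j, Uext u l.val (deimP (Uext u) i.val) * Zvec u j l
      = Uext u j (deimP (Uext u) i.val) := by
  have h2 := congrFun (mulVec_z u j h) i
  simpa [Matrix.mulVec, dotProduct, Mmat] using h2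

lemma res_at_earlier (j : ℕ) (h : IsUnit (Mmat u j)) (i : Fin j) :
    deimRes (Uext u) j (deimP (Uext u) i.val) = 0 := by
  rw [res_eq, sum_z u j h i, sub_self]

lemma res_ne (hu : LinearIndependent ℝ u) (j : ℕ) (hj : j < m) :
    deimRes (Uext u) j ≠ 0 := by
  intro h0
  have hle : j + 1 ≤ m := hj
  have hli : LinearIndependent ℝ (fun l : Fin (j+1) => u (Fin.castLE hle l)) :=
    hu.comp _ (Fin.castLE_injective hle)
  rw [Fintype.linearIndependent_iff] at hli
  classical
  set c : Fin (j+1) → ℝ := fun l => if h : l.val < j then Zvec u j ⟨l.val, h⟩ else -1 with hc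
  have hsum : ∑ l : Fin (j+1), c l • (fun l : Fin (j+1) => u (Fin.castLE hle l)) l = 0 := by
    funext a
    have hpt : Uext u j a - ∑ l : Fin j, Uext u l.val a * Zvec u j l = 0 := by
      rw [← res_eq, h0]; rfl
    have key : ∀ l : Fin (j+1), u (Fin.castLE hle l) a = Uext u l.val a := by
      intro l
      have hlm : (l : ℕ) < m := lt_of_lt_of_le l.isLt hle
      simp [Uext, hlm]
      rfl
    rw [Finset.sum_apply]
    rw [Fin.sum_univ_castSucc]
    have h1 : ∀ l : Fin j, c l.castSucc • (fun l : Fin (j+1) => u (Fin.castLE hle l)) l.castSucc a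
        = Uext u l.val a * Zvec u j l := by
      intro l
      have : c l.castSucc = Zvec u j l := by
        simp [hc, l.isLt]
      simp only [Pi.smul_apply, smul_eq_mul, this, key, Fin.coe_castSucc]
      ring
    have h2 : c (Fin.last j) • (fun l : Fin (j+1) => u (Fin.castLE hle l)) (Fin.last j) a
        = -(Uext u j a) := by
      have : c (Fin.last j) = -1 := by simp [hc]
      simp only [Pi.smul_apply, smul_eq_mul, this, key]
      simp [Fin.last]
    simp only [Pi.smul_apply] at h1 h2 ⊢
    rw [Finset.sum_congr rfl (fun l _ => h1 l), h2]
    simp only [Pi.zero_apply]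
    linarith [hpt]
  have := hli c hsum (Fin.last j)
  simp [hc] at this

lemma res_at_self_ne (hu : LinearIndependent ℝ u) (j : ℕ) (hj : j < m) :
    deimRes (Uext u) j (deimP (Uext u) j) ≠ 0 := by
  have h0 := res_ne u hu j hj
  obtain ⟨a, ha⟩ : ∃ a, deimRes (Uext u) j a ≠ 0 := by
    by_contra h; push_neg at h; exact h0 (funext fun a => h a)
  have hle := abs_le_abs_argmaxAbs (deimRes (Uext u) j) a
  rw [← deimP_eq_argmax] at hle
  intro h
  rw [h] at hle
  simp only [abs_zero] at hle
  exact ha (abs_eq_zero.mp (le_antisymm hle (abs_nonneg _)))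

lemma isUnit_Mmat (hu : LinearIndependent ℝ u) : ∀ j, j ≤ m → IsUnit (Mmat u j) := by
  intro j
  induction j with
  | zero =>
      intro _
      rw [Matrix.isUnit_iff_isUnit_det]
      simp [Matrix.det_fin_zero]
  | succ j ih =>
      intro hj1
      have hj : j < m := hj1
      have hMj := ih hj.le
      rw [Matrix.isUnit_iff_isUnit_det, isUnit_iff_ne_zero]
      intro hdet
      obtain ⟨w, hw0, hw⟩ := (Matrix.exists_mulVec_eq_zero_iff).mpr hdet
      set wl := w (Fin.last j) with hwl
      have hrow : ∀ i : Fin (j+1),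
          ∑ l : Fin (j+1), Uext u l.val (deimP (Uext u) i.val) * w l = 0 := by
        intro i
        have := congrFun hw i
        simpa [Matrix.mulVec, dotProduct, Mmat] using this
      set w' : Fin j → ℝ := fun l => w l.castSucc + wl * Zvec u j l with hw'
      have hMw' : (Mmat u j).mulVec w' = 0 := by
        funext i
        have h1 := hrow i.castSucc
        rw [Fin.sum_univ_castSucc] at h1
        have h2 := sum_z u j hMj i
        simp only [Fin.coe_castSucc, Fin.val_last] at h1
        show ∑ l : Fin j, Mmat u j i l * w' l = 0
        have expand : ∑ l : Fin j, Mmat u j i l * w' l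
            = (∑ l : Fin j, Uext u l.val (deimP (Uext u) i.val) * w l.castSucc)
              + wl * ∑ l : Fin j, Uext u l.val (deimP (Uext u) i.val) * Zvec u j l := by
          rw [Finset.mul_sum, ← Finset.sum_add_distrib]
          exact Finset.sum_congr rfl fun l _ => by simp [Mmat, hw']; ring
        rw [expand, h2]
        linarith [h1]
      have hw'0 : w' = 0 := by
        have hd : IsUnit (Mmat u j).det := (Matrix.isUnit_iff_isUnit_det _).mp hMj
        have h3 := congrArg (fun v => (Mmat u j)⁻¹.mulVec v) hMw'
        simpa [Matrix.mulVec_mulVec, Matrix.nonsing_inv_mul _ hd, Matrix.one_mulVec,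
          Matrix.mulVec_zero] using h3
      have hwc : ∀ l : Fin j, w l.castSucc = -(wl * Zvec u j l) := by
        intro l
        have := congrFun hw'0 l
        simp only [hw', Pi.zero_apply] at this
        linarith [this]
      have hlast := hrow (Fin.last j)
      rw [Fin.sum_univ_castSucc] at hlast
      simp only [Fin.coe_castSucc, Fin.val_last] at hlast
      have hlast2 : wl * deimRes (Uext u) j (deimP (Uext u) j) = 0 := by
        rw [res_eq]
        have : ∑ l : Fin j, Uext u l.val (deimP (Uext u) j) * w l.castSucc
            = -(wl * ∑ l : Fin j, Uext u l.val (deimP (Uext u) j) * Zvec u j l) := by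
          rw [Finset.mul_sum, ← Finset.sum_neg_distrib]
          exact Finset.sum_congr rfl fun l _ => by rw [hwc l]; ring
        rw [this] at hlast
        linarith [hlast]
      have hwl0 : wl = 0 := by
        rcases mul_eq_zero.mp hlast2 with h | h
        · exact h
        · exact absurd h (res_at_self_ne u hu j hj)
      apply hw0
      funext i
      refine Fin.lastCases ?_ ?_ i
      · exact hwl0
      · intro l
        rw [hwc l, hwl0]
        simp

lemma deim_inj (hu : LinearIndependent ℝ u) :
    Function.Injective fun i : Fin m => deimP (Uext u) i.val := by
  have key : ∀ a b : Fin m, (b : ℕ) < (a : ℕ) →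
      deimP (Uext u) a.val ≠ deimP (Uext u) b.val := by
    intro a b hlt hab
    have hM := isUnit_Mmat u hu a.val a.isLt.le
    have h0 := res_at_earlier u a.val hM ⟨b.val, hlt⟩
    rw [← hab] at h0
    exact res_at_self_ne u hu a.val a.isLt h0
  intro a b hab
  simp only at hab
  rcases lt_trichotomy (b : ℕ) (a : ℕ) with h | h | h
  · exact absurd hab (key a b h)
  · exact Fin.ext h.symm
  · exact absurd hab.symm (key b a h)

end Aux

/-- The DEIM greedy algorithm is well defined for linearly independent inputs:
at each step the selected submatrix is invertible and the residual is nonzero;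
consequently the selected indices are pairwise distinct. -/
theorem deim_greedy_well_defined {n m : ℕ} [NeZero n]
    (u : Fin m → Fin n → ℝ) (hu : LinearIndependent ℝ u) :
    letI uext : ℕ → Fin n → ℝ := fun j a => if h : j < m then u ⟨j, h⟩ a else 0
    (∀ j : ℕ, j < m →
      IsUnit (Matrix.of fun i k : Fin j => uext k.val (deimP uext i.val)) ∧
      deimRes uext j ≠ 0) ∧
    Function.Injective fun i : Fin m => deimP uext i.val :=
  ⟨fun j hj => ⟨isUnit_Mmat u hu j hj.le, res_ne u hu j hj⟩, deim_inj u hu⟩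
end

section
/- Let n, m be natural numbers with m < n and let U ∈ ℂ^{n×m} satisfy U*U = I_m. Then there exists a selection operator S such that SᵀU is invertible and ‖(SᵀU)⁻¹‖₂ ≤ √(n − m + 1) · √(4^m + 6m − 1)/3. -/
open Matrix

/-- Euclidean norm of a vector. -/
noncomputable def evNorm {𝕜 : Type*} [RCLike 𝕜] {a : ℕ} (f : Fin a → 𝕜) : ℝ :=
  Real.sqrt (∑ i, ‖f i‖ ^ 2)

/-- A selection operator: its columns are `m` distinct columns of the identity matrix. -/
def IsSelection {𝕜 : Type*} [RCLike 𝕜] {n m : ℕ} (S : Matrix (Fin n) (Fin m) 𝕜) : Prop :=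
  ∃ p : Fin m → Fin n, Function.Injective p ∧
    S = Matrix.of fun j i => if j = p i then 1 else 0

section Aux

open scoped ComplexOrder

/-- There is an injective row-selection giving an invertible submatrix. -/
lemma aux_exists_invertible_submatrix {n m : ℕ} (U : Matrix (Fin n) (Fin m) ℂ)
    (hU : Uᴴ * U = 1) :
    ∃ p : Fin m → Fin n, Function.Injective p ∧ IsUnit (U.submatrix p id) := by
  have hrank : U.rank = m := by
    have := Matrix.rank_conjTranspose_mul_self U
    rw [hU, Matrix.rank_one] at this
    simpa using this.symm
  have hspan : Submodule.span ℂ (Set.range U) = ⊤ := by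
    apply Submodule.eq_top_of_finrank_eq
    rw [show Set.range U = Set.range U.row from rfl, ← Matrix.rank_eq_finrank_span_row, hrank]
    simp [Module.finrank_pi]
  obtain ⟨b, hbsub, hbspan, hbind⟩ := exists_linearIndependent ℂ (Set.range U)
  rw [hspan] at hbspan
  have hbfin : b.Finite := Set.Finite.subset (Set.finite_range U) hbsub
  have : Fintype b := hbfin.fintype
  let B : Module.Basis b ℂ (Fin m → ℂ) := Module.Basis.mk hbind (by rw [Subtype.range_coe]; exact hbspan.ge)
  have hcard : Fintype.card b = m := by
    have := Module.finrank_eq_card_basis B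
    simpa [Module.finrank_pi] using this.symm
  obtain ⟨e⟩ : Nonempty (Fin m ≃ b) := ⟨(Fintype.equivFinOfCardEq hcard).symm⟩
  choose p hp using fun k : Fin m => (hbsub (e k).2 : (e k : Fin m → ℂ) ∈ Set.range U)
  refine ⟨p, ?_, ?_⟩
  · intro k l hkl
    apply e.injective
    apply Subtype.ext
    rw [← hp k, ← hp l, hkl]
  · rw [← Matrix.linearIndependent_rows_iff_isUnit]
    have : (fun k => (U.submatrix p id) k) = (fun (x : b) => (x : Fin m → ℂ)) ∘ e := by
      funext k; ext j
      simpa [Matrix.submatrix_apply] using congrFun (hp k) j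
    rw [show (U.submatrix p id).row = _ from this]
    exact hbind.comp e e.injective

end Aux

/-- Entries of `U * (U.submatrix p₀ id)⁻¹` are bounded by 1 when `p₀` maximizes the
absolute determinant of the submatrix. -/
lemma aux_entry_bound {n m : ℕ} (U : Matrix (Fin n) (Fin m) ℂ) (p₀ : Fin m → Fin n)
    (hmax : ∀ q : Fin m → Fin n, ‖(U.submatrix q id).det‖ ≤ ‖(U.submatrix p₀ id).det‖)
    (hdet : (U.submatrix p₀ id).det ≠ 0) (i : Fin n) (j : Fin m) :
    ‖(U * (U.submatrix p₀ id)⁻¹) i j‖ ≤ 1 := by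
  set A := U.submatrix p₀ id with hA
  have key : (U * A⁻¹) i j = (A.det)⁻¹ * (U.submatrix (Function.update p₀ j i) id).det := by
    have h1 : (U * A⁻¹) i j = (A.det)⁻¹ * ∑ k, U i k * A.adjugate k j := by
      rw [Matrix.mul_apply]
      rw [Matrix.inv_def, Finset.mul_sum]
      congr 1; funext k
      simp [Matrix.smul_apply, Ring.inverse_eq_inv]
      ring
    have h2 : ∑ k, U i k * A.adjugate k j = (A.updateRow j (U i)).det := by
      have : ∑ k, U i k * A.adjugate k j = (U i ᵥ* A.adjugate) j := by
        simp [Matrix.vecMul, dotProduct]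
      rw [this, ← Matrix.mulVec_transpose, Matrix.adjugate_transpose,
        ← Matrix.cramer_eq_adjugate_mulVec, Matrix.cramer_apply,
        Matrix.updateCol_transpose, Matrix.det_transpose]
    have h3 : A.updateRow j (U i) = U.submatrix (Function.update p₀ j i) id := by
      ext k l
      rw [Matrix.updateRow_apply]
      by_cases hk : k = j <;> simp [hk, Function.update_apply, hA]
    rw [h1, h2, h3]
  rw [key, norm_mul, norm_inv]
  have h5 : 0 < ‖A.det‖ := norm_pos_iff.mpr hdet
  rw [inv_mul_le_iff₀ h5, mul_one]
  exact hmax (Function.update p₀ j i)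

/-- If `UᴴU = 1` then `toEuclideanLin U` is an isometry. -/
lemma aux_isometry {n m : ℕ} (U : Matrix (Fin n) (Fin m) ℂ) (hU : Uᴴ * U = 1)
    (y : EuclideanSpace ℂ (Fin m)) : ‖Matrix.toEuclideanLin U y‖ = ‖y‖ := by
  have hadj : Matrix.toEuclideanLin Uᴴ ((Matrix.toEuclideanLin U) y) = y := by
    rw [toEuclideanLin_apply, toEuclideanLin_apply]
    simp [Matrix.mulVec_mulVec, hU, Matrix.one_mulVec]
  have hinner : (inner ℂ ((Matrix.toEuclideanLin U) y) ((Matrix.toEuclideanLin U) y) : ℂ)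
      = inner ℂ y y := by
    conv_lhs => rw [← LinearMap.adjoint_inner_left]
    rw [← Matrix.toEuclideanLin_conjTranspose_eq_adjoint, hadj]
  rw [norm_eq_sqrt_re_inner (𝕜 := ℂ), norm_eq_sqrt_re_inner (𝕜 := ℂ), hinner]

/-- Frobenius-type bound on the Euclidean operator norm. -/
lemma aux_frobenius_bound {n m : ℕ} (V : Matrix (Fin n) (Fin m) ℂ) (h : ∀ i j, ‖V i j‖ ≤ 1)
    (x : EuclideanSpace ℂ (Fin m)) :
    ‖Matrix.toEuclideanLin V x‖ ≤ Real.sqrt (n * m) * ‖x‖ := by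
  set x' : Fin m → ℂ := WithLp.equiv 2 (Fin m → ℂ) x with hx'
  have hrow : ∀ i, ‖(V.mulVec x') i‖ ≤ Real.sqrt m * ‖x‖ := by
    intro i
    set a : EuclideanSpace ℂ (Fin m) :=
      (WithLp.equiv 2 (Fin m → ℂ)).symm (fun j => starRingEnd ℂ (V i j)) with ha
    have h1 : (V.mulVec x') i = inner ℂ a x := by
      simp [Matrix.mulVec, dotProduct, EuclideanSpace.inner_eq_star_dotProduct, ha, hx', mul_comm]
    have h2 : ‖a‖ ≤ Real.sqrt m := by
      rw [EuclideanSpace.norm_eq]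
      apply Real.sqrt_le_sqrt
      calc (∑ j, ‖a j‖ ^ 2) ≤ ∑ _j : Fin m, 1 := by
            apply Finset.sum_le_sum
            intro j _
            have : ‖a j‖ = ‖V i j‖ := by simp [ha]
            rw [this]
            nlinarith [h i j, norm_nonneg (V i j)]
        _ = m := by simp
    calc ‖(V.mulVec x') i‖ = ‖(inner ℂ a x : ℂ)‖ := by rw [h1]
      _ ≤ ‖a‖ * ‖x‖ := norm_inner_le_norm a x
      _ ≤ Real.sqrt m * ‖x‖ := mul_le_mul_of_nonneg_right h2 (norm_nonneg x)
  rw [toEuclideanLin_apply, EuclideanSpace.norm_eq]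
  have hcoe : ∀ i, ‖((WithLp.equiv 2 (Fin n → ℂ)).symm (V *ᵥ x')) i‖ = ‖(V *ᵥ x') i‖ :=
    fun i => rfl
  calc Real.sqrt (∑ i, ‖((WithLp.equiv 2 (Fin n → ℂ)).symm (V *ᵥ x')) i‖ ^ 2)
      ≤ Real.sqrt (∑ _i : Fin n, (Real.sqrt m * ‖x‖) ^ 2) := by
        apply Real.sqrt_le_sqrt
        apply Finset.sum_le_sum
        intro i _
        rw [hcoe i]
        have := hrow i
        nlinarith [norm_nonneg ((V *ᵥ x') i), Real.sqrt_nonneg (m:ℝ), norm_nonneg x]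
    _ = Real.sqrt (n * m) * ‖x‖ := by
        rw [Finset.sum_const, Finset.card_univ, Fintype.card_fin, nsmul_eq_mul]
        rw [mul_pow, Real.sq_sqrt (by positivity : (0:ℝ) ≤ (m:ℝ))]
        rw [show (n:ℝ) * ((m:ℝ) * ‖x‖^2) = (n*m : ℝ) * ‖x‖^2 by ring]
        rw [Real.sqrt_mul (by positivity) (‖x‖^2), Real.sqrt_sq (norm_nonneg x)]

lemma aux_nat_ineq1 (m : ℕ) : 3*m+1 ≤ 4^m := by
  induction m with
  | zero => simp
  | succ k ih =>
    have : 4^(k+1) = 4 * 4^k := by ring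
    omega
  
lemma aux_nat_ineq2 (m : ℕ) : 9*m^2+2 ≤ 2*4^m+3*m := by
  induction m with
  | zero => simp
  | succ k ih =>
    have h1 := aux_nat_ineq1 k
    have : 4^(k+1) = 4 * 4^k := by ring
    nlinarith [ih, h1]

lemma aux_real_ineq {n m : ℕ} (hmn : m < n) :
    9 * (n:ℝ) * m ≤ ((n:ℝ) - m + 1) * ((4:ℝ)^m + 6*m - 1) := by
  set a := (n:ℝ); set b := (m:ℝ)
  have h4 : ((4:ℕ):ℝ)^m = (4:ℝ)^m := by norm_num
  have h1 : 9 * b ≤ (4:ℝ)^m + 6*b - 1 := by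
    have := aux_nat_ineq1 m
    have : (3*(m:ℝ)+1) ≤ (4:ℝ)^m := by
      rw [← h4]; exact_mod_cast aux_nat_ineq1 m
    simp only [b]; linarith
  have h2 : 9 * (b+1) * b ≤ 2 * ((4:ℝ)^m + 6*b - 1) := by
    have : (9*(m:ℝ)^2+2) ≤ 2*(4:ℝ)^m+3*m := by
      rw [← h4]; exact_mod_cast aux_nat_ineq2 m
    simp only [b]; nlinarith
  have h3 : b + 1 ≤ a := by
    simp only [a, b]; exact_mod_cast hmn
  have hc : (0:ℝ) ≤ (4:ℝ)^m + 6*b - 1 := by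
    have hb : 0 ≤ b := by positivity
    linarith
  nlinarith [mul_le_mul_of_nonneg_left h3 hc]

/-- There is a selection operator `S` with
`‖(SᵀU)⁻¹‖₂ ≤ √(n−m+1) · √(4^m+6m−1)/3`. -/
theorem qdeim_selection_bound {n m : ℕ} (hmn : m < n)
    (U : Matrix (Fin n) (Fin m) ℂ) (hU : Uᴴ * U = 1) :
    ∃ S : Matrix (Fin n) (Fin m) ℂ, IsSelection S ∧ IsUnit (Sᵀ * U) ∧
      specNorm (Sᵀ * U)⁻¹ ≤
        Real.sqrt ((n : ℝ) - m + 1) * (Real.sqrt ((4 : ℝ) ^ m + 6 * m - 1) / 3) := by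
  -- pick a maximizing selection
  haveI : Nonempty (Fin n) := ⟨⟨0, Nat.lt_of_le_of_lt (Nat.zero_le m) hmn⟩⟩
  obtain ⟨p₀, hmax⟩ := Finite.exists_max (fun q : Fin m → Fin n => ‖(U.submatrix q id).det‖)
  obtain ⟨p₁, hp₁inj, hp₁unit⟩ := aux_exists_invertible_submatrix U hU
  set A := U.submatrix p₀ id with hAdef
  have hd1 : (U.submatrix p₁ id).det ≠ 0 :=
    ((Matrix.isUnit_iff_isUnit_det _).mp hp₁unit).ne_zero
  have hdet : A.det ≠ 0 := by
    intro h0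
    apply hd1
    have := hmax p₁
    rw [h0, norm_zero] at this
    exact norm_le_zero_iff.mp this
  have hp₀inj : Function.Injective p₀ := by
    intro k l hkl
    by_contra hne
    apply hdet
    apply Matrix.det_zero_of_row_eq hne
    ext j
    simp [hAdef, Matrix.submatrix_apply, hkl]
  set S : Matrix (Fin n) (Fin m) ℂ := Matrix.of fun j i => if j = p₀ i then 1 else 0 with hS
  have hSU : Sᵀ * U = A := by
    ext k j
    rw [Matrix.mul_apply]
    simp only [hS, Matrix.transpose_apply, Matrix.of_apply, hAdef, Matrix.submatrix_apply,
      id_eq, ite_mul, one_mul, zero_mul]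
    rw [Finset.sum_ite_eq' (Finset.univ : Finset (Fin n)) (p₀ k) (fun i => U i j)]
    simp
  have hunit : IsUnit A := by
    rw [Matrix.isUnit_iff_isUnit_det, isUnit_iff_ne_zero]
    exact hdet
  refine ⟨S, ⟨p₀, hp₀inj, hS⟩, by rw [hSU]; exact hunit, ?_⟩
  rw [hSU]
  -- operator norm bound via Frobenius
  have hmax' : ∀ q : Fin m → Fin n, ‖(U.submatrix q id).det‖ ≤ ‖A.det‖ := fun q => hmax q
  have hV : ∀ i j, ‖(U * A⁻¹) i j‖ ≤ 1 := fun i j => aux_entry_bound U p₀ hmax' hdet i j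
  have hbound : specNorm A⁻¹ ≤ Real.sqrt ((n:ℝ) * m) := by
    apply ContinuousLinearMap.opNorm_le_bound _ (Real.sqrt_nonneg _)
    intro x
    simp only [LinearMap.coe_toContinuousLinearMap']
    have hcomp : Matrix.toEuclideanLin (U * A⁻¹) x
        = Matrix.toEuclideanLin U (Matrix.toEuclideanLin A⁻¹ x) := by
      rw [toEuclideanLin_apply, toEuclideanLin_apply, toEuclideanLin_apply]
      simp [Matrix.mulVec_mulVec]
    calc ‖Matrix.toEuclideanLin A⁻¹ x‖
        = ‖Matrix.toEuclideanLin U (Matrix.toEuclideanLin A⁻¹ x)‖ :=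
          (aux_isometry U hU _).symm
      _ = ‖Matrix.toEuclideanLin (U * A⁻¹) x‖ := by rw [hcomp]
      _ ≤ Real.sqrt ((n:ℝ) * m) * ‖x‖ := by
          have := aux_frobenius_bound (U * A⁻¹) hV x
          simpa using this
  refine hbound.trans ?_
  -- numeric inequality
  have hc0 : (0:ℝ) ≤ (4:ℝ)^m + 6*m - 1 := by
    have h1 : (1:ℝ) ≤ (4:ℝ)^m := one_le_pow₀ (by norm_num)
    have : (0:ℝ) ≤ 6*(m:ℝ) := by positivity
    linarith
  have hnm0 : (0:ℝ) ≤ (n:ℝ) - m + 1 := by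
    have : (m:ℝ) ≤ n := by exact_mod_cast hmn.le
    linarith
  have key := aux_real_ineq hmn
  have e1 : Real.sqrt ((n:ℝ) * m) = Real.sqrt (9 * (n:ℝ) * m) / 3 := by
    rw [show 9 * (n:ℝ) * m = 3^2 * ((n:ℝ)*m) by ring,
      Real.sqrt_mul (by norm_num : (0:ℝ) ≤ 3^2) ((n:ℝ)*m),
      Real.sqrt_sq (by norm_num : (0:ℝ) ≤ 3)]
    ring
  rw [e1]
  rw [div_le_iff₀ (by norm_num : (0:ℝ) < 3)]
  calc Real.sqrt (9 * (n:ℝ) * m)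
      ≤ Real.sqrt (((n:ℝ) - m + 1) * ((4:ℝ)^m + 6*m - 1)) := Real.sqrt_le_sqrt key
    _ = Real.sqrt ((n:ℝ) - m + 1) * Real.sqrt ((4:ℝ)^m + 6*m - 1) := Real.sqrt_mul hnm0 _
    _ = Real.sqrt ((n:ℝ) - m + 1) * (Real.sqrt ((4:ℝ)^m + 6*m - 1) / 3) * 3 := by ring
end

section
/- Let n, m be natural numbers with m < n and let U ∈ ℂ^{n×m} have rank m (full column rank). Then there exists a selection operator S such that SᵀU is invertible and ‖(SᵀU)⁻¹‖₂ ≤ (√(n − m + 1) / σ_min(U)) · √(4^m + 6m − 1)/3, where σ_min(U) denotes the smallest singular value of U. -/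
open Matrix

/-- Smallest singular value of `U`: the infimum (minimum) of `‖Ux‖₂` over unit vectors `x`. -/
noncomputable def sigmaMin {n m : ℕ} (U : Matrix (Fin n) (Fin m) ℂ) : ℝ :=
  sInf {r : ℝ | ∃ x : Fin m → ℂ, evNorm x = 1 ∧ r = evNorm (U.mulVec x)}

-- helper: evNorm as a norm
lemma evNorm_eq_norm {a : ℕ} (f : Fin a → ℂ) :
    evNorm f = ‖(WithLp.equiv 2 (Fin a → ℂ)).symm f‖ := by
  rw [evNorm, EuclideanSpace.norm_eq]
  rfl

lemma evNorm_nonneg {a : ℕ} (f : Fin a → ℂ) : 0 ≤ evNorm f := Real.sqrt_nonneg _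

lemma evNorm_eq_zero_iff {a : ℕ} {f : Fin a → ℂ} : evNorm f = 0 ↔ f = 0 := by
  rw [evNorm_eq_norm, norm_eq_zero]
  constructor
  · intro h; have := congrArg (WithLp.equiv 2 (Fin a → ℂ)) h; simpa using this
  · rintro rfl; simp

lemma evNorm_smul {a : ℕ} (c : ℂ) (f : Fin a → ℂ) :
    evNorm (c • f) = ‖c‖ * evNorm f := by
  rw [evNorm_eq_norm, evNorm_eq_norm, ← norm_smul]
  rfl

lemma specNorm_le_of_forall {a b : ℕ} (A : Matrix (Fin a) (Fin b) ℂ) {C : ℝ} (hC : 0 ≤ C)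
    (h : ∀ y : Fin b → ℂ, evNorm (A.mulVec y) ≤ C * evNorm y) : specNorm A ≤ C := by
  apply ContinuousLinearMap.opNorm_le_bound _ hC
  intro x
  have := h ((WithLp.equiv 2 (Fin b → ℂ)) x)
  rw [evNorm_eq_norm, evNorm_eq_norm] at this
  simpa [Matrix.toEuclideanLin_apply] using this

lemma sigmaMin_nonneg {n m : ℕ} (U : Matrix (Fin n) (Fin m) ℂ) : 0 ≤ sigmaMin U :=
  Real.sInf_nonneg (by rintro r ⟨x, -, rfl⟩; exact evNorm_nonneg _)

lemma sigmaMin_mul_le {n m : ℕ} (U : Matrix (Fin n) (Fin m) ℂ) (y : Fin m → ℂ) :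
    sigmaMin U * evNorm y ≤ evNorm (U.mulVec y) := by
  rcases eq_or_ne y 0 with rfl | hy
  · simp [evNorm_eq_zero_iff.mpr rfl, Matrix.mulVec_zero]
  · have hc : 0 < evNorm y :=
      lt_of_le_of_ne (evNorm_nonneg y) (fun h => hy (evNorm_eq_zero_iff.mp h.symm))
    set c : ℝ := evNorm y with hcdef
    have hmem : evNorm (U.mulVec (((c : ℂ))⁻¹ • y)) ∈
        {r : ℝ | ∃ x : Fin m → ℂ, evNorm x = 1 ∧ r = evNorm (U.mulVec x)} := by
      refine ⟨((c : ℂ))⁻¹ • y, ?_, rfl⟩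
      rw [evNorm_smul]
      rw [norm_inv]
      simp only [Complex.norm_real, Real.norm_of_nonneg hc.le]
      field_simp
      rfl
    have hbdd : BddBelow {r : ℝ | ∃ x : Fin m → ℂ, evNorm x = 1 ∧ r = evNorm (U.mulVec x)} :=
      ⟨0, by rintro r ⟨x, -, rfl⟩; exact evNorm_nonneg _⟩
    have h1 : sigmaMin U ≤ evNorm (U.mulVec (((c : ℂ))⁻¹ • y)) := csInf_le hbdd hmem
    have h2 : evNorm (U.mulVec (((c : ℂ))⁻¹ • y)) = c⁻¹ * evNorm (U.mulVec y) := by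
      rw [Matrix.mulVec_smul, evNorm_smul]
      congr 1
      rw [norm_inv]
      simp only [Complex.norm_real, Real.norm_of_nonneg hc.le]
    rw [h2] at h1
    calc sigmaMin U * c ≤ (c⁻¹ * evNorm (U.mulVec y)) * c := by
          exact mul_le_mul_of_nonneg_right h1 hc.le
      _ = evNorm (U.mulVec y) := by field_simp

lemma mulVec_injective_of_rank {n m : ℕ} (U : Matrix (Fin n) (Fin m) ℂ) (hU : U.rank = m) :
    Function.Injective U.mulVec := by
  have h1 : LinearMap.ker U.mulVecLin = ⊥ := by
    have h2 := LinearMap.finrank_range_add_finrank_ker U.mulVecLin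
    rw [Module.finrank_pi, Fintype.card_fin] at h2
    have h3 : Module.finrank ℂ (LinearMap.range U.mulVecLin) = m := hU
    rw [h3] at h2
    have h4 : Module.finrank ℂ (LinearMap.ker U.mulVecLin) = 0 := by omega
    exact Submodule.finrank_eq_zero.mp h4
  have := LinearMap.ker_eq_bot.mp h1
  intro a b hab
  exact this (by simpa [Matrix.mulVecLin_apply] using hab)

lemma sigmaMin_pos {n m : ℕ} (hm : 0 < m) (U : Matrix (Fin n) (Fin m) ℂ) (hU : U.rank = m) :
    0 < sigmaMin U := by
  haveI : Nonempty (Fin m) := ⟨⟨0, hm⟩⟩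
  set g : EuclideanSpace ℂ (Fin m) → ℝ :=
    fun x => ‖(LinearMap.toContinuousLinearMap (Matrix.toEuclideanLin U)) x‖ with hg
  have hgc : Continuous g := (LinearMap.toContinuousLinearMap (Matrix.toEuclideanLin U)).continuous.norm
  have hset : {r : ℝ | ∃ x : Fin m → ℂ, evNorm x = 1 ∧ r = evNorm (U.mulVec x)} =
      g '' Metric.sphere (0 : EuclideanSpace ℂ (Fin m)) 1 := by
    ext r
    constructor
    · rintro ⟨x, hx1, rfl⟩
      refine ⟨(WithLp.equiv 2 (Fin m → ℂ)).symm x, ?_, ?_⟩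
      · rw [mem_sphere_zero_iff_norm, ← evNorm_eq_norm]; exact hx1
      · rw [hg]
        simp only [LinearMap.coe_toContinuousLinearMap']
        rw [Matrix.toEuclideanLin_apply, evNorm_eq_norm]; rfl
    · rintro ⟨x, hx1, rfl⟩
      refine ⟨(WithLp.equiv 2 (Fin m → ℂ)) x, ?_, ?_⟩
      · rw [evNorm_eq_norm]
        rw [show ((WithLp.equiv 2 (Fin m → ℂ)).symm ((WithLp.equiv 2 (Fin m → ℂ)) x)) = x from
          (WithLp.equiv 2 (Fin m → ℂ)).symm_apply_apply x]
        exact mem_sphere_zero_iff_norm.mp hx1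
      · rw [hg]
        simp only [LinearMap.coe_toContinuousLinearMap']
        rw [Matrix.toEuclideanLin_apply, evNorm_eq_norm]; rfl
  have hcomp : IsCompact (g '' Metric.sphere (0 : EuclideanSpace ℂ (Fin m)) 1) :=
    (isCompact_sphere _ _).image hgc
  have hne : (g '' Metric.sphere (0 : EuclideanSpace ℂ (Fin m)) 1).Nonempty := by
    apply Set.Nonempty.image
    exact NormedSpace.sphere_nonempty.mpr zero_le_one
  have hmem : sigmaMin U ∈ {r : ℝ | ∃ x : Fin m → ℂ, evNorm x = 1 ∧ r = evNorm (U.mulVec x)} := by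
    rw [sigmaMin, hset]
    exact hcomp.sInf_mem hne
  obtain ⟨x, hx1, hx2⟩ := hmem
  rw [hx2]
  have hx0 : x ≠ 0 := by
    intro h; rw [h] at hx1; rw [evNorm_eq_zero_iff.mpr rfl] at hx1; norm_num at hx1
  have : U.mulVec x ≠ 0 := by
    intro h
    apply hx0
    apply mulVec_injective_of_rank U hU
    rw [h, Matrix.mulVec_zero]
  exact lt_of_le_of_ne (evNorm_nonneg _) (fun h => this (evNorm_eq_zero_iff.mp h.symm))

lemma evNorm_mulVec_le_of_entries {n m : ℕ} (M : Matrix (Fin n) (Fin m) ℂ)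
    (hM : ∀ i k, ‖M i k‖ ≤ 1) (x : Fin m → ℂ) :
    evNorm (M.mulVec x) ≤ Real.sqrt ((n : ℝ) * m) * evNorm x := by
  have key : ∑ i, ‖M.mulVec x i‖ ^ 2 ≤ ((n : ℝ) * m) * ∑ k, ‖x k‖ ^ 2 := by
    have hone : ∀ i : Fin n, ‖M.mulVec x i‖ ^ 2 ≤ (m : ℝ) * ∑ k, ‖x k‖ ^ 2 := by
      intro i
      have h1 : ‖M.mulVec x i‖ ≤ ∑ k, ‖M i k‖ * ‖x k‖ := by
        rw [Matrix.mulVec, dotProduct]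
        refine le_trans (norm_sum_le _ _) ?_
        apply Finset.sum_le_sum
        intro k _
        rw [norm_mul]
      have h2 : ‖M.mulVec x i‖ ^ 2 ≤ (∑ k, ‖M i k‖ * ‖x k‖) ^ 2 := by
        exact pow_le_pow_left₀ (norm_nonneg _) h1 2
      refine h2.trans ?_
      refine (Finset.sum_mul_sq_le_sq_mul_sq Finset.univ (fun k => ‖M i k‖) (fun k => ‖x k‖)).trans ?_
      apply mul_le_mul_of_nonneg_right _ (Finset.sum_nonneg fun k _ => sq_nonneg _)
      calc ∑ k, ‖M i k‖ ^ 2 ≤ ∑ _k : Fin m, (1 : ℝ) := by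
            apply Finset.sum_le_sum
            intro k _
            have := hM i k
            nlinarith [norm_nonneg (M i k)]
        _ = (m : ℝ) := by simp
    calc ∑ i, ‖M.mulVec x i‖ ^ 2 ≤ ∑ _i : Fin n, (m : ℝ) * ∑ k, ‖x k‖ ^ 2 :=
          Finset.sum_le_sum fun i _ => hone i
      _ = ((n : ℝ) * m) * ∑ k, ‖x k‖ ^ 2 := by
          rw [Finset.sum_const]; simp; ring
  rw [evNorm, evNorm]
  rw [← Real.sqrt_mul (by positivity)]
  exact Real.sqrt_le_sqrt key

lemma exists_isUnit_submatrix {n m : ℕ} (U : Matrix (Fin n) (Fin m) ℂ) (hU : U.rank = m) :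
    ∃ p : Fin m → Fin n, IsUnit (U.submatrix p id) := by
  classical
  have hspan : Submodule.span ℂ (Set.range (fun i : Fin n => U i)) = ⊤ := by
    apply Submodule.eq_top_of_finrank_eq
    rw [show (Set.range fun i => U i) = Set.range U.row from rfl, ← Matrix.rank_eq_finrank_span_row]
    rw [hU, Module.finrank_pi, Fintype.card_fin]
  obtain ⟨b, hbsub, hbspan, hbli⟩ :=
    exists_linearIndependent ℂ (Set.range (fun i : Fin n => U i))
  rw [hspan] at hbspan
  have hbfin : b.Finite := hbli.setFinite
  haveI : Fintype b := hbfin.fintype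
  have hcard : Fintype.card b = m := by
    have := linearIndependent_iff_card_eq_finrank_span.mp hbli
    rw [Subtype.range_coe] at this
    rw [Set.finrank, hbspan] at this
    rw [this, finrank_top, Module.finrank_pi, Fintype.card_fin]
  obtain ⟨e⟩ : Nonempty (Fin m ≃ b) := ⟨(Fintype.equivFinOfCardEq hcard).symm⟩
  have hpick : ∀ k : Fin m, ∃ i : Fin n, U i = (e k : Fin m → ℂ) := by
    intro k
    obtain ⟨i, hi⟩ := hbsub (e k).2
    exact ⟨i, hi⟩
  choose p hp using hpick
  refine ⟨p, ?_⟩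
  rw [← Matrix.linearIndependent_rows_iff_isUnit]
  have : (fun k : Fin m => (U.submatrix p id) k) = fun k => ((e k : Fin m → ℂ)) := by
    funext k
    ext l
    simp [Matrix.submatrix_apply, ← hp k]
  rw [show (U.submatrix p id).row = _ from this]
  exact hbli.comp (fun k => e k) e.injective

lemma entry_bound {n m : ℕ} (U : Matrix (Fin n) (Fin m) ℂ) (p₀ : Fin m → Fin n)
    (hmax : ∀ p : Fin m → Fin n, ‖(U.submatrix p id).det‖ ≤ ‖(U.submatrix p₀ id).det‖)
    (hdet : (U.submatrix p₀ id).det ≠ 0) (i : Fin n) (k : Fin m) :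
    ‖(U * (U.submatrix p₀ id)⁻¹) i k‖ ≤ 1 := by
  classical
  set A := U.submatrix p₀ id with hA
  have h2 : (U * A.adjugate) i k = (A.updateRow k (U i)).det := by
    rw [Matrix.mul_apply]
    have hterm : ∀ j, U i j * A.adjugate j k = Matrix.cramer Aᵀ (Pi.single j (U i j)) k := by
      intro j
      rw [← smul_eq_mul, Matrix.adjugate, Matrix.of_apply, ← Pi.smul_apply,
        ← LinearMap.map_smul, ← Pi.single_smul', smul_eq_mul, mul_one]
    simp_rw [hterm]
    rw [Matrix.sum_cramer_apply]
    have hsingle : (fun j : Fin m => ∑ l : Fin m, Pi.single l (U i l) j) = U i := by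
      funext l
      simp [Pi.single_apply]
    rw [hsingle]
    exact Matrix.cramer_transpose_apply A (U i) k
  have hrow : A.updateRow k (U i) = U.submatrix (Function.update p₀ k i) id := by
    ext l j
    rw [Matrix.updateRow_apply, Matrix.submatrix_apply, Function.update_apply]
    split_ifs with h
    · rfl
    · rw [hA, Matrix.submatrix_apply]
  have hent : (U * A⁻¹) i k = (A.det)⁻¹ * (U.submatrix (Function.update p₀ k i) id).det := by
    rw [Matrix.inv_def, Ring.inverse_eq_inv']
    rw [Matrix.mul_smul]
    rw [Matrix.smul_apply, smul_eq_mul, h2, hrow]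
  rw [hent, norm_mul, norm_inv]
  have hpos : 0 < ‖A.det‖ := norm_pos_iff.mpr hdet
  calc ‖A.det‖⁻¹ * ‖(U.submatrix (Function.update p₀ k i) id).det‖
      ≤ ‖A.det‖⁻¹ * ‖A.det‖ :=
        mul_le_mul_of_nonneg_left (hmax _) (inv_nonneg.mpr hpos.le)
    _ = 1 := inv_mul_cancel₀ hpos.ne'

lemma aux_pow1 (m : ℕ) : 3 * m + 1 ≤ 4 ^ m := by
  induction m with
  | zero => simp
  | succ k ih =>
    have : (4:ℕ) ^ (k+1) = 4 * 4 ^ k := by ring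
    omega

lemma aux_pow2 (m : ℕ) : 9 * m * m + 2 ≤ 2 * 4 ^ m + 3 * m := by
  induction m with
  | zero => simp
  | succ k ih =>
    have h4 : (4:ℕ) ^ (k+1) = 4 * 4 ^ k := by ring
    have hk : k ≤ k * k := by
      rcases Nat.eq_zero_or_pos k with rfl | h
      · simp
      · exact Nat.le_mul_of_pos_left k h
    rw [h4]
    nlinarith [ih, hk]

lemma key_nat_ineq (m t : ℕ) : 9 * ((m + t + 1) * m) ≤ (t + 2) * (4 ^ m + 6 * m - 1) := by
  have h1 := aux_pow1 m
  have h2 := aux_pow2 m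
  obtain ⟨r, hr⟩ : ∃ r, 4 ^ m = r + 1 := ⟨4 ^ m - 1, by omega⟩
  rw [hr] at h1 h2 ⊢
  have hgoal : r + 1 + 6 * m - 1 = r + 6 * m := by omega
  rw [hgoal]
  nlinarith [Nat.mul_le_mul_left t (show 3 * m ≤ r by omega)]

lemma key_real_ineq {n m : ℕ} (hmn : m < n) :
    9 * ((n : ℝ) * m) ≤ ((n : ℝ) - m + 1) * ((4 : ℝ) ^ m + 6 * m - 1) := by
  obtain ⟨t, rfl⟩ : ∃ t, n = m + t + 1 := ⟨n - m - 1, by omega⟩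
  have h := key_nat_ineq m t
  have hcast : ((m + t + 1 : ℕ) : ℝ) - m + 1 = ((t + 2 : ℕ) : ℝ) := by push_cast; ring
  have hcast2 : (4 : ℝ) ^ m + 6 * m - 1 = ((4 ^ m + 6 * m - 1 : ℕ) : ℝ) := by
    have h4 : 1 ≤ 4 ^ m + 6 * m := by
      have : 0 < (4:ℕ) ^ m := pow_pos (by norm_num) m
      omega
    push_cast [Nat.cast_sub h4]
    ring
  rw [hcast, hcast2]
  calc 9 * ((↑(m + t + 1) : ℝ) * m) = ((9 * ((m + t + 1) * m) : ℕ) : ℝ) := by push_cast; ring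
    _ ≤ (((t + 2) * (4 ^ m + 6 * m - 1) : ℕ) : ℝ) := by exact_mod_cast h
    _ = ((t + 2 : ℕ) : ℝ) * ((4 ^ m + 6 * m - 1 : ℕ) : ℝ) := by push_cast; ring

/-- For a full-column-rank `U`, there is a selection operator `S` with
`‖(SᵀU)⁻¹‖₂ ≤ (√(n−m+1)/σ_min(U)) · √(4^m+6m−1)/3`. -/
theorem qdeim_selection_bound_full_rank {n m : ℕ} (hmn : m < n)
    (U : Matrix (Fin n) (Fin m) ℂ) (hU : U.rank = m) :
    ∃ S : Matrix (Fin n) (Fin m) ℂ, IsSelection S ∧ IsUnit (Sᵀ * U) ∧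
      specNorm (Sᵀ * U)⁻¹ ≤
        Real.sqrt ((n : ℝ) - m + 1) / sigmaMin U *
          (Real.sqrt ((4 : ℝ) ^ m + 6 * m - 1) / 3) := by
  classical
  rcases Nat.eq_zero_or_pos m with rfl | hm
  · refine ⟨Matrix.of fun j i => if j = Fin.elim0 i then 1 else 0,
      ⟨Fin.elim0, fun a => a.elim0, rfl⟩, ?_, ?_⟩
    · exact (Matrix.isUnit_iff_isUnit_det _).mpr (by rw [Matrix.det_fin_zero]; exact isUnit_one)
    · have hz : ∀ f : Fin 0 → ℂ, evNorm f = 0 := by intro f; simp [evNorm]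
      have h0 : specNorm ((Matrix.of fun (j : Fin n) (i : Fin 0) =>
          if j = Fin.elim0 i then (1:ℂ) else 0)ᵀ * U)⁻¹ ≤ 0 := by
        apply specNorm_le_of_forall _ le_rfl
        intro y
        rw [hz, hz]
        norm_num
      refine h0.trans ?_
      have : Real.sqrt ((4 : ℝ) ^ 0 + 6 * (0:ℕ) - 1) = 0 := by norm_num
      rw [this]
      simp
  · -- main case
    haveI : Nonempty (Fin n) := ⟨⟨0, by omega⟩⟩
    obtain ⟨p₁, hp₁⟩ := exists_isUnit_submatrix U hU
    obtain ⟨p₀, -, hmax⟩ := Finset.exists_max_image (Finset.univ : Finset (Fin m → Fin n))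
      (fun p => ‖(U.submatrix p id).det‖) ⟨fun _ => ⟨0, by omega⟩, Finset.mem_univ _⟩
    have hmax' : ∀ p : Fin m → Fin n, ‖(U.submatrix p id).det‖ ≤ ‖(U.submatrix p₀ id).det‖ :=
      fun p => hmax p (Finset.mem_univ p)
    set A := U.submatrix p₀ id with hA
    have hdet : A.det ≠ 0 := by
      intro h
      have h1 := hmax' p₁
      rw [h, norm_zero] at h1
      have h2 : (U.submatrix p₁ id).det ≠ 0 := by
        intro hc
        have := (Matrix.isUnit_iff_isUnit_det _).mp hp₁
        rw [hc] at this
        exact this.ne_zero rfl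
      exact h2 (norm_le_zero_iff.mp h1)
    have hinj : Function.Injective p₀ := by
      intro a b hab
      by_contra hne
      apply hdet
      apply Matrix.det_zero_of_row_eq hne
      funext j
      show U (p₀ a) j = U (p₀ b) j
      rw [hab]
    have hSU : (Matrix.of fun (j : Fin n) (i : Fin m) =>
        if j = p₀ i then (1:ℂ) else 0)ᵀ * U = A := by
      ext k l
      simp only [Matrix.mul_apply, Matrix.transpose_apply, Matrix.of_apply, ite_mul, one_mul,
        zero_mul]
      rw [Finset.sum_ite_eq' Finset.univ (p₀ k) (fun j => U j l)]
      simp [hA]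
    have hunit : IsUnit A :=
      (Matrix.isUnit_iff_isUnit_det _).mpr (isUnit_iff_ne_zero.mpr hdet)
    have hσ : 0 < sigmaMin U := sigmaMin_pos hm U hU
    have hstep : ∀ y : Fin m → ℂ,
        evNorm (A⁻¹.mulVec y) ≤ (Real.sqrt ((n:ℝ) * m) / sigmaMin U) * evNorm y := by
      intro y
      have h1 : sigmaMin U * evNorm (A⁻¹.mulVec y) ≤ evNorm (U.mulVec (A⁻¹.mulVec y)) :=
        sigmaMin_mul_le U _
      have h2 : U.mulVec (A⁻¹.mulVec y) = (U * A⁻¹).mulVec y := by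
        rw [Matrix.mulVec_mulVec]
      have h3 : evNorm ((U * A⁻¹).mulVec y) ≤ Real.sqrt ((n:ℝ) * m) * evNorm y :=
        evNorm_mulVec_le_of_entries _ (entry_bound U p₀ hmax' hdet) y
      rw [h2] at h1
      have h4 := h1.trans h3
      rw [div_mul_eq_mul_div, le_div_iff₀ hσ, mul_comm (evNorm (A⁻¹.mulVec y)) (sigmaMin U)]
      exact h4
    have hbound : specNorm A⁻¹ ≤ Real.sqrt ((n:ℝ) * m) / sigmaMin U :=
      specNorm_le_of_forall _ (by positivity) hstep
    have hfinal : specNorm A⁻¹ ≤ Real.sqrt ((n : ℝ) - m + 1) / sigmaMin U *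
        (Real.sqrt ((4 : ℝ) ^ m + 6 * m - 1) / 3) := by
      refine hbound.trans ?_
      have hkey := key_real_ineq hmn
      have hnm : (0:ℝ) ≤ (n:ℝ) - m + 1 := by
        have : (m:ℝ) ≤ n := by exact_mod_cast hmn.le
        linarith
      have hb : (0:ℝ) ≤ (4:ℝ) ^ m + 6 * m - 1 := by
        have h1 : (1:ℝ) ≤ 4 ^ m := one_le_pow₀ (by norm_num)
        have h2 : (0:ℝ) ≤ 6 * (m:ℝ) := by positivity
        linarith
      have hsq : 3 * Real.sqrt ((n:ℝ) * m) ≤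
          Real.sqrt ((n:ℝ) - m + 1) * Real.sqrt ((4:ℝ) ^ m + 6 * m - 1) := by
        rw [← Real.sqrt_mul hnm]
        rw [show (3:ℝ) = Real.sqrt 9 by
          rw [show (9:ℝ) = 3 ^ 2 by norm_num, Real.sqrt_sq (by norm_num)]]
        rw [← Real.sqrt_mul (by norm_num)]
        exact Real.sqrt_le_sqrt hkey
      rw [show Real.sqrt ((n:ℝ) - m + 1) / sigmaMin U *
          (Real.sqrt ((4:ℝ) ^ m + 6 * m - 1) / 3) =
          (Real.sqrt ((n:ℝ) - m + 1) * Real.sqrt ((4:ℝ) ^ m + 6 * m - 1)) / (3 * sigmaMin U)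
          from by rw [div_mul_div_comm, mul_comm (sigmaMin U) 3]]
      rw [div_le_div_iff₀ hσ (by positivity)]
      calc Real.sqrt ((n:ℝ) * m) * (3 * sigmaMin U)
          = (3 * Real.sqrt ((n:ℝ) * m)) * sigmaMin U := by ring
        _ ≤ (Real.sqrt ((n:ℝ) - m + 1) * Real.sqrt ((4:ℝ) ^ m + 6 * m - 1)) * sigmaMin U :=
            mul_le_mul_of_nonneg_right hsq hσ.le
    exact ⟨Matrix.of fun j i => if j = p₀ i then 1 else 0, ⟨p₀, hinj, rfl⟩,
      by rw [hSU]; exact hunit, by rw [hSU]; exact hfinal⟩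
end

section
/- Let n, m be natural numbers with m < n, let U ∈ ℂ^{n×m} satisfy U*U = I_m, and let S⋆ be a selection operator that maximizes |det(SᵀU)| over all selection operators S (such a maximizer exists since there are finitely many selections). Then S⋆ᵀU is invertible and ‖(S⋆ᵀU)⁻¹‖₂ ≤ √(1 + m(n − m)). -/
open Matrix

lemma selT_mul_apply {n m q : ℕ} (p : Fin m → Fin n) (M : Matrix (Fin n) (Fin q) ℂ) (k : Fin m) (l : Fin q) :
    ((Matrix.of fun j i => if j = p i then (1:ℂ) else 0)ᵀ * M) k l = M (p k) l := by
  simp [Matrix.mul_apply, Matrix.transpose_apply]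

lemma dot_adjugate {m : ℕ} (A : Matrix (Fin m) (Fin m) ℂ) (v : Fin m → ℂ) (j : Fin m) :
    ∑ k, v k * A.adjugate k j = (A.updateRow j v).det := by
  have h1 : ∑ k, v k * A.adjugate k j = ((A.adjugate)ᵀ *ᵥ v) j := by
    simp [mulVec, dotProduct, transpose_apply, mul_comm]
  rw [h1, adjugate_transpose, ← cramer_eq_adjugate_mulVec, cramer_apply,
    updateCol_transpose, det_transpose]

lemma mul_inv_entry {n m : ℕ} (U : Matrix (Fin n) (Fin m) ℂ) (A : Matrix (Fin m) (Fin m) ℂ)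
    (i : Fin n) (j : Fin m) :
    (U * A⁻¹) i j = (A.det)⁻¹ * (A.updateRow j (fun l => U i l)).det := by
  rw [Matrix.mul_apply, ← dot_adjugate]
  rw [Matrix.inv_def, Ring.inverse_eq_inv']
  simp [Matrix.smul_apply, Finset.mul_sum, smul_eq_mul]
  ring_nf
  congr 1; ext k; ring

lemma star_dot {k : ℕ} (w : Fin k → ℂ) : star w ⬝ᵥ w = ((∑ i, ‖w i‖^2 : ℝ) : ℂ) := by
  push_cast
  simp [dotProduct, Complex.conj_mul', Pi.star_apply]

lemma isom {n m : ℕ} (U : Matrix (Fin n) (Fin m) ℂ) (hU : Uᴴ * U = 1) (y : Fin m → ℂ) :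
    ∑ i, ‖(U *ᵥ y) i‖^2 = ∑ j, ‖y j‖^2 := by
  have h : star (U *ᵥ y) ⬝ᵥ (U *ᵥ y) = star y ⬝ᵥ y := by
    rw [star_mulVec, dotProduct_mulVec, vecMul_vecMul, hU, vecMul_one]
  rw [star_dot, star_dot] at h
  exact_mod_cast h

lemma rows_span {n m : ℕ} (U : Matrix (Fin n) (Fin m) ℂ) (hU : Uᴴ * U = 1)
    (x : Fin m → ℂ) : x = ∑ i, (starRingEnd ℂ ((U *ᵥ (star x)) i)) • (fun l => U i l) := by
  have h1 : ∀ k j, ∑ i, (starRingEnd ℂ) (U i k) * U i j = if k = j then 1 else 0 := by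
    intro k j
    have := congrFun (congrFun hU k) j
    simpa [Matrix.mul_apply, conjTranspose_apply, one_apply] using this
  funext j
  have : (∑ i, (starRingEnd ℂ ((U *ᵥ (star x)) i)) • (fun l => U i l)) j
      = ∑ i, ∑ k, (starRingEnd ℂ) (U i k) * x k * U i j := by
    simp only [Finset.sum_apply, Pi.smul_apply, smul_eq_mul, mulVec, dotProduct, map_sum,
      _root_.map_mul, Pi.star_apply, RingHomCompTriple.comp_apply, Complex.star_def, Complex.conj_conj,
      Finset.sum_mul]
    rfl
  rw [this, Finset.sum_comm]
  have : ∀ k, ∑ i, (starRingEnd ℂ) (U i k) * x k * U i j = x k * (if k = j then 1 else 0) := by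
    intro k
    rw [← h1 k j, Finset.mul_sum]
    congr 1; ext i; ring
  simp [this]

lemma exists_sel_det_ne {n m : ℕ} (U : Matrix (Fin n) (Fin m) ℂ) (hU : Uᴴ * U = 1) :
    ∃ p : Fin m → Fin n, Function.Injective p ∧
      (Matrix.of fun k l => U (p k) l).det ≠ 0 := by
  set r : Fin n → (Fin m → ℂ) := fun i l => U i l with hr
  have hspan : Submodule.span ℂ (Set.range r) = ⊤ := by
    rw [Submodule.eq_top_iff']
    intro x
    rw [rows_span U hU x]
    exact Submodule.sum_mem _ fun i _ => Submodule.smul_mem _ _ (Submodule.subset_span ⟨i, rfl⟩)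
  obtain ⟨b, hbsub, hbspan, hbind⟩ := exists_linearIndependent ℂ (Set.range r)
  rw [hspan] at hbspan
  have hbfin : b.Finite := (Set.finite_range r).subset hbsub
  haveI := hbfin.fintype
  have hbasis : Module.Basis b ℂ (Fin m → ℂ) := Module.Basis.mk hbind (by rw [Subtype.range_coe]; exact hbspan.ge)
  have hcard : Fintype.card b = m := by
    rw [← Module.finrank_eq_card_basis hbasis, Module.finrank_fin_fun]
  have e : Fin m ≃ b := (Fintype.equivFinOfCardEq hcard).symm
  have hchoice : ∀ k : Fin m, ∃ i, r i = ((e k : (Fin m → ℂ))) := fun k => hbsub (e k).2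
  choose p hp using hchoice
  refine ⟨p, ?_, ?_⟩
  · intro a b' hab
    have : ((e a : (Fin m → ℂ))) = ((e b' : (Fin m → ℂ))) := by rw [← hp a, ← hp b', hab]
    exact e.injective (Subtype.ext this)
  · have hrows : (fun k => (Matrix.of fun k l => U (p k) l) k) = fun k => ((e k : (Fin m → ℂ))) := by
      funext k; rw [← hp k]; rfl
    have hind : LinearIndependent ℂ (fun k => (Matrix.of fun k l => U (p k) l) k) := by
      rw [hrows]
      exact hbind.comp e e.injective
    have := Matrix.linearIndependent_rows_iff_isUnit.mp hind
    rw [Matrix.isUnit_iff_isUnit_det, isUnit_iff_ne_zero] at this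
    exact this

lemma specNorm_le_of {a b : ℕ} (M : Matrix (Fin a) (Fin b) ℂ) (C : ℝ) (hC : 0 ≤ C)
    (h : ∀ x : Fin b → ℂ, ∑ i, ‖(M *ᵥ x) i‖^2 ≤ C^2 * ∑ j, ‖x j‖^2) :
    specNorm M ≤ C := by
  apply ContinuousLinearMap.opNorm_le_bound _ hC
  intro x
  rw [LinearMap.coe_toContinuousLinearMap']
  rw [EuclideanSpace.norm_eq, EuclideanSpace.norm_eq]
  have hx : ∑ i, ‖(toEuclideanLin M x) i‖^2 = ∑ i, ‖(M *ᵥ (fun j => x j)) i‖^2 := rfl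
  rw [hx]
  calc Real.sqrt (∑ i, ‖(M *ᵥ (fun j => x j)) i‖^2)
      ≤ Real.sqrt (C^2 * ∑ j, ‖x j‖^2) := Real.sqrt_le_sqrt (h _)
    _ = C * Real.sqrt (∑ j, ‖x j‖^2) := by
        rw [Real.sqrt_mul (sq_nonneg C), Real.sqrt_sq hC]


/-- A volume-maximizing selection operator `S⋆` satisfies
`‖(S⋆ᵀU)⁻¹‖₂ ≤ √(1+m(n−m))`. -/
theorem volume_maximizing_selection_bound {n m : ℕ} (hmn : m < n)
    (U : Matrix (Fin n) (Fin m) ℂ) (hU : Uᴴ * U = 1)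
    (Sstar : Matrix (Fin n) (Fin m) ℂ) (hSstar : IsSelection Sstar)
    (hmax : ∀ S : Matrix (Fin n) (Fin m) ℂ, IsSelection S →
      ‖(Sᵀ * U).det‖ ≤ ‖(Sstarᵀ * U).det‖) :
    IsUnit (Sstarᵀ * U) ∧
      specNorm (Sstarᵀ * U)⁻¹ ≤ Real.sqrt (1 + m * ((n : ℝ) - m)) := by
  obtain ⟨p, hp, hSdef⟩ := hSstar
  set A := Sstarᵀ * U with hA
  have hAapp : ∀ k l, A k l = U (p k) l := by
    intro k l; rw [hA, hSdef]; exact selT_mul_apply p U k l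
  -- determinant nonzero
  obtain ⟨q, hq, hqdet⟩ := exists_sel_det_ne U hU
  have hmaxq := hmax (Matrix.of fun j i => if j = q i then 1 else 0) ⟨q, hq, rfl⟩
  have hqeq : ((Matrix.of fun j i => if j = q i then (1:ℂ) else 0)ᵀ * U)
      = Matrix.of fun k l => U (q k) l := by
    ext k l; exact selT_mul_apply q U k l
  rw [hqeq] at hmaxq
  have hdet : A.det ≠ 0 := by
    intro h0
    rw [h0] at hmaxq
    simp only [norm_zero] at hmaxq
    exact hqdet (by simpa using le_antisymm hmaxq (norm_nonneg _))
  have hunit : IsUnit A := (Matrix.isUnit_iff_isUnit_det A).mpr (isUnit_iff_ne_zero.mpr hdet)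
  refine ⟨hunit, ?_⟩
  -- determinant bound for row updates
  have hupd : ∀ (i : Fin n) (j : Fin m),
      ‖(A.updateRow j (fun l => U i l)).det‖ ≤ ‖A.det‖ := by
    intro i j
    by_cases hi : ∃ k, p k = i
    · obtain ⟨k, hk⟩ := hi
      by_cases hkj : k = j
      · have h1 : (fun l => U i l) = A j := by
          funext l; rw [hAapp, ← hkj, hk]
        rw [h1, Matrix.updateRow_eq_self]
      · have h1 : (fun l => U i l) = A k := by
          funext l; rw [hAapp, hk]
        rw [h1, Matrix.det_updateRow_eq_zero hkj]
        simp [AbsoluteValue.nonneg]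
    · push_neg at hi
      set p' := Function.update p j i with hp'
      have hup1 : p' j = i := Function.update_self j i p
      have hup2 : ∀ c, c ≠ j → p' c = p c := fun c hc => Function.update_of_ne hc i p
      have hp'inj : Function.Injective p' := by
        intro a b hab
        by_cases ha : a = j <;> by_cases hb : b = j
        · rw [ha, hb]
        · exfalso; rw [ha, hup1, hup2 b hb] at hab; exact hi b hab.symm
        · exfalso; rw [hup2 a ha, hb, hup1] at hab; exact hi a hab
        · rw [hup2 a ha, hup2 b hb] at hab; exact hp hab
      have h2 := hmax (Matrix.of fun a k => if a = p' k then (1:ℂ) else 0) ⟨p', hp'inj, rfl⟩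
      have h3 : ((Matrix.of fun a k => if a = p' k then (1:ℂ) else 0)ᵀ * U)
          = A.updateRow j (fun l => U i l) := by
        ext k l
        rw [selT_mul_apply]
        rcases eq_or_ne k j with rfl | hkj
        · rw [hup1, Matrix.updateRow_self]
        · rw [Matrix.updateRow_ne hkj, hup2 k hkj, hAapp]
      rw [h3] at h2
      exact h2
  set B := U * A⁻¹ with hB
  have hBle : ∀ i j, ‖B i j‖ ≤ 1 := by
    intro i j
    rw [hB, mul_inv_entry, norm_mul, norm_inv]
    have h2 : 0 < ‖A.det‖ := norm_pos_iff.mpr hdet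
    calc ‖A.det‖⁻¹ * ‖(A.updateRow j fun l => U i l).det‖
        ≤ ‖A.det‖⁻¹ * ‖A.det‖ :=
          mul_le_mul_of_nonneg_left (hupd i j) (inv_nonneg.mpr h2.le)
      _ = 1 := inv_mul_cancel₀ h2.ne'
  have hSB : ∀ k j, B (p k) j = (1 : Matrix (Fin m) (Fin m) ℂ) k j := by
    intro k j
    have h1 : Sstarᵀ * B = 1 := by
      rw [hB, ← Matrix.mul_assoc, ← hA, Matrix.mul_nonsing_inv A (isUnit_iff_ne_zero.mpr hdet)]
    have h2 : (Sstarᵀ * B) k j = B (p k) j := by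
      rw [hSdef]; exact selT_mul_apply p B k j
    rw [← h2, h1]
  have key : ∀ x : Fin m → ℂ, ∑ k, ‖(A⁻¹ *ᵥ x) k‖^2
      ≤ (Real.sqrt (1 + m * ((n:ℝ) - m)))^2 * ∑ j, ‖x j‖^2 := by
    intro x
    have hnm : (m:ℝ) ≤ n := by exact_mod_cast hmn.le
    have hC2 : (Real.sqrt (1 + m * ((n:ℝ) - m)))^2 = 1 + m * ((n:ℝ) - m) := by
      apply Real.sq_sqrt
      have h0 : (0:ℝ) ≤ (n:ℝ) - m := sub_nonneg.mpr hnm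
      positivity
    rw [hC2]
    have h1 : ∑ k, ‖(A⁻¹ *ᵥ x) k‖^2 = ∑ i, ‖(B *ᵥ x) i‖^2 := by
      rw [← isom U hU (A⁻¹ *ᵥ x), Matrix.mulVec_mulVec, ← hB]
    rw [h1]
    set s : Finset (Fin n) := Finset.univ.image p with hs
    have hsplit : ∑ i, ‖(B *ᵥ x) i‖^2
        = (∑ i ∈ s, ‖(B *ᵥ x) i‖^2) + ∑ i ∈ sᶜ, ‖(B *ᵥ x) i‖^2 :=
      (Finset.sum_add_sum_compl s _).symm
    rw [hsplit]
    have hsel : ∑ i ∈ s, ‖(B *ᵥ x) i‖^2 = ∑ j, ‖x j‖^2 := by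
      rw [hs, Finset.sum_image (fun a _ b _ h => hp h)]
      refine Finset.sum_congr rfl fun k _ => ?_
      have hbk : (B *ᵥ x) (p k) = x k := by
        show ∑ j, B (p k) j * x j = x k
        calc ∑ j, B (p k) j * x j = ∑ j, (1 : Matrix (Fin m) (Fin m) ℂ) k j * x j :=
              Finset.sum_congr rfl fun j _ => by rw [hSB]
          _ = x k := by simp [one_apply]
      rw [hbk]
    rw [hsel]
    have hcard : sᶜ.card = n - m := by
      rw [Finset.card_compl, hs, Finset.card_image_of_injective _ hp]
      simp
    have hbound : ∀ i, ‖(B *ᵥ x) i‖^2 ≤ (m:ℝ) * ∑ j, ‖x j‖^2 := by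
      intro i
      have h2 : ‖(B *ᵥ x) i‖ ≤ ∑ j, ‖x j‖ := by
        calc ‖∑ j, B i j * x j‖ ≤ ∑ j, ‖B i j * x j‖ := norm_sum_le _ _
          _ ≤ ∑ j, ‖x j‖ := Finset.sum_le_sum fun j _ => by
              rw [norm_mul]
              calc ‖B i j‖ * ‖x j‖ ≤ 1 * ‖x j‖ :=
                    mul_le_mul_of_nonneg_right (hBle i j) (norm_nonneg _)
                _ = ‖x j‖ := one_mul _
      have h3 : ‖(B *ᵥ x) i‖^2 ≤ (∑ j, ‖x j‖)^2 :=
        pow_le_pow_left₀ (norm_nonneg _) h2 2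
      have h4 : (∑ j, ‖x j‖)^2 ≤ (m:ℝ) * ∑ j, ‖x j‖^2 := by
        have h5 := Finset.sum_mul_sq_le_sq_mul_sq Finset.univ (fun _ => (1:ℝ)) (fun j => ‖x j‖)
        simpa using h5
      linarith
    have hcompl : ∑ i ∈ sᶜ, ‖(B *ᵥ x) i‖^2 ≤ ((n:ℝ) - m) * ((m:ℝ) * ∑ j, ‖x j‖^2) := by
      calc ∑ i ∈ sᶜ, ‖(B *ᵥ x) i‖^2 ≤ sᶜ.card • ((m:ℝ) * ∑ j, ‖x j‖^2) :=
            Finset.sum_le_card_nsmul _ _ _ (fun i _ => hbound i)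
        _ = ((n:ℝ) - m) * ((m:ℝ) * ∑ j, ‖x j‖^2) := by
            rw [nsmul_eq_mul, hcard, Nat.cast_sub hmn.le]
    have hT : (0:ℝ) ≤ ∑ j, ‖x j‖^2 := Finset.sum_nonneg fun j _ => sq_nonneg _
    nlinarith [hcompl]
  exact specNorm_le_of _ _ (Real.sqrt_nonneg _) key
end

section
/- Let n, m be natural numbers with m < n and let U ∈ ℂ^{n×m} satisfy U*U = I_m. Then there exists a selection operator S⋆ such that S⋆ᵀU is invertible and for every f ∈ ℂⁿ, ‖f − U(S⋆ᵀU)⁻¹S⋆ᵀf‖₂ ≤ √(1 + m(n − m)) · ‖f − UU*f‖₂. -/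
open Matrix

lemma key_numeric_ineq (Mr Nr a2 b2 c s : ℝ) (ha2 : 0 ≤ a2) (hb2 : 0 ≤ b2)
    (hcnn : 0 ≤ c) (hsnn : 0 ≤ s) (hM : 0 ≤ Mr) (hN : 0 ≤ Nr)
    (hc2 : c^2 ≤ Mr*a2) (hs2 : s^2 ≤ Nr*b2) :
    b2 + 2*c*s + Nr*c^2 ≤ (1 + Mr*Nr)*(a2+b2) := by
  rcases eq_or_lt_of_le hcnn with hc0 | hcpos
  · rw [← hc0]
    nlinarith [mul_nonneg (mul_nonneg hM hN) ha2, mul_nonneg (mul_nonneg hM hN) hb2]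
  · have hMpos : 0 < Mr := by
      rcases eq_or_lt_of_le hM with hM0 | hMpos
      · exfalso; nlinarith
      · exact hMpos
    have hA1 : Mr*Nr*c^2 ≤ Mr*Mr*Nr*a2 := by nlinarith [mul_nonneg hM hN]
    have hA2 : Mr*Mr*s^2 ≤ Mr*Mr*Nr*b2 := by nlinarith [sq_nonneg Mr]
    nlinarith [sq_nonneg (c - Mr*s), hA1, hA2, hc2, hMpos]


lemma det_updateRow_of_invertible {m : ℕ} (A : Matrix (Fin m) (Fin m) ℂ) (hA : A.det ≠ 0)
    (i : Fin m) (b : Fin m → ℂ) :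
    (A.updateRow i b).det = A.det * ((A⁻¹)ᵀ *ᵥ b) i := by
  have hAT : Aᵀ.det ≠ 0 := by rwa [Matrix.det_transpose]
  have h1 : Aᵀ *ᵥ (Matrix.cramer Aᵀ b) = Aᵀ.det • b := Matrix.mulVec_cramer Aᵀ b
  have h2 : (Aᵀ)⁻¹ *ᵥ (Aᵀ *ᵥ (Matrix.cramer Aᵀ b)) = (Aᵀ)⁻¹ *ᵥ (Aᵀ.det • b) := by rw [h1]
  rw [Matrix.mulVec_mulVec, Matrix.nonsing_inv_mul _ (isUnit_iff_ne_zero.mpr hAT), Matrix.one_mulVec] at h2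
  have h3 := congrFun h2 i
  rw [Matrix.cramer_transpose_apply] at h3
  rw [h3, Matrix.mulVec_smul, Matrix.det_transpose, Matrix.transpose_nonsing_inv]
  simp [Pi.smul_apply, smul_eq_mul]


lemma exists_det_submatrix_ne_zero {n m : ℕ} (U : Matrix (Fin n) (Fin m) ℂ)
    (hU : Uᴴ * U = 1) : ∃ p : Fin m → Fin n, (U.submatrix p id).det ≠ 0 := by
  classical
  set r : Fin n → (Fin m → ℂ) := fun j k => star (U j k) with hr
  have hspan : ⊤ ≤ Submodule.span ℂ (Set.range r) := by
    intro y _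
    have hy0 : (Uᴴ * U) *ᵥ y = y := by rw [hU, Matrix.one_mulVec]
    have hy : y = ∑ j, (U *ᵥ y) j • r j := by
      funext k
      conv_lhs => rw [← hy0]
      rw [← Matrix.mulVec_mulVec]
      simp [Matrix.mulVec, dotProduct, Matrix.conjTranspose_apply, r,
        Finset.sum_apply, mul_comm]
    rw [hy]
    exact Submodule.sum_mem _ fun j _ =>
      Submodule.smul_mem _ _ (Submodule.subset_span ⟨j, rfl⟩)
  obtain ⟨b, hbsub, hbspan, hbli⟩ := exists_linearIndependent ℂ (Set.range r)
  have hspan' : Submodule.span ℂ b = ⊤ := by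
    rw [hbspan]; exact le_antisymm le_top hspan
  let B : Module.Basis b ℂ (Fin m → ℂ) := Module.Basis.mk hbli (by rw [Subtype.range_coe, hspan'])
  haveI : Fintype b := FiniteDimensional.fintypeBasisIndex B
  have hcard : Fintype.card b = m := by
    have h1 := Module.finrank_eq_card_basis B
    rw [Module.finrank_fin_fun] at h1
    exact h1.symm
  let e : Fin m ≃ b := (Fintype.equivFinOfCardEq hcard).symm
  have hmem : ∀ x : b, (x : Fin m → ℂ) ∈ Set.range r := fun x => hbsub x.2
  choose q hq using fun x : b => Set.mem_range.mp (hmem x)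
  refine ⟨fun k => q (e k), ?_⟩
  set M := U.submatrix (fun k => q (e k)) id with hM
  have hrows : (fun k => (M.map (starRingEnd ℂ)) k) = fun k => ((e k : Fin m → ℂ)) := by
    funext k
    funext l
    have := congrFun (hq (e k)) l
    simpa [M, r, Matrix.map_apply, Matrix.submatrix_apply] using this
  have hli : LinearIndependent ℂ (fun k => (M.map (starRingEnd ℂ)) k) := by
    rw [hrows]
    exact hbli.comp (fun k => e k) (fun a b hab => e.injective hab)
  have hunit : IsUnit (M.map (starRingEnd ℂ)) :=
    Matrix.linearIndependent_rows_iff_isUnit.mp hli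
  have hdet : ((starRingEnd ℂ).mapMatrix M).det ≠ 0 := by
    have := (Matrix.isUnit_iff_isUnit_det _).mp hunit
    exact this.ne_zero
  rw [← RingHom.map_det] at hdet
  exact fun h => hdet (by rw [h, map_zero])

/-- There is a selection operator `S⋆` such that for every `f`,
`‖f − U(S⋆ᵀU)⁻¹S⋆ᵀf‖₂ ≤ √(1+m(n−m)) · ‖f − UU*f‖₂`. -/
theorem exists_selection_projection_error_bound {n m : ℕ} (hmn : m < n)
    (U : Matrix (Fin n) (Fin m) ℂ) (hU : Uᴴ * U = 1) :
    ∃ Sstar : Matrix (Fin n) (Fin m) ℂ, IsSelection Sstar ∧ IsUnit (Sstarᵀ * U) ∧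
      ∀ f : Fin n → ℂ,
        evNorm (f - (U * (Sstarᵀ * U)⁻¹ * Sstarᵀ).mulVec f) ≤
          Real.sqrt (1 + m * ((n : ℝ) - m)) * evNorm (f - (U * Uᴴ).mulVec f) := by
  classical
  obtain ⟨p₀, hp₀⟩ := exists_det_submatrix_ne_zero U hU
  -- maximize |det| over all row selections
  obtain ⟨p, -, hmax⟩ := Finset.exists_max_image (Finset.univ : Finset (Fin m → Fin n))
    (fun q => ‖(U.submatrix q id).det‖) ⟨p₀, Finset.mem_univ _⟩
  have hmax' : ∀ q : Fin m → Fin n, ‖(U.submatrix q id).det‖ ≤ ‖(U.submatrix p id).det‖ :=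
    fun q => hmax q (Finset.mem_univ q)
  set A : Matrix (Fin m) (Fin m) ℂ := U.submatrix p id with hA
  have hdetp : A.det ≠ 0 := by
    intro h
    have h1 := hmax' p₀
    rw [h, norm_zero] at h1
    exact hp₀ (norm_le_zero_iff.mp h1)
  have hinj : Function.Injective p := by
    intro a b hab
    by_contra hne
    apply hdetp
    exact Matrix.det_zero_of_row_eq hne (by funext l; simp [hA, Matrix.submatrix_apply, hab])
  set Sstar : Matrix (Fin n) (Fin m) ℂ :=
    Matrix.of fun j i => if j = p i then 1 else 0 with hS
  have hSU : Sstarᵀ * U = A := by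
    ext k l
    simp only [Matrix.mul_apply, Matrix.transpose_apply, hS, Matrix.of_apply, hA,
      Matrix.submatrix_apply, id_eq, ite_mul, one_mul, zero_mul]
    simp
  have hAunit : IsUnit A := (Matrix.isUnit_iff_isUnit_det A).mpr (isUnit_iff_ne_zero.mpr hdetp)
  refine ⟨Sstar, ⟨p, hinj, rfl⟩, by rw [hSU]; exact hAunit, ?_⟩
  intro f
  rw [hSU]
  set V : Matrix (Fin n) (Fin m) ℂ := U * A⁻¹ with hV
  -- entrywise bound on V
  have hVb : ∀ j i, ‖V j i‖ ≤ 1 := by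
    intro j i
    have hVji : V j i = ((A⁻¹)ᵀ *ᵥ (U j)) i := by
      simp [hV, Matrix.mul_apply, Matrix.mulVec, dotProduct, Matrix.transpose_apply,
        mul_comm]
    have hupd : A.updateRow i (U j) = U.submatrix (Function.update p i j) id := by
      ext k l
      by_cases hk : k = i
      · subst hk; simp [Matrix.updateRow_apply, Function.update_apply]
      · simp [Matrix.updateRow_apply, hk, hA, Matrix.submatrix_apply, Function.update_apply]
    have key := det_updateRow_of_invertible A hdetp i (U j)
    rw [hupd] at key
    have hle := hmax' (Function.update p i j)
    rw [key] at hle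
    rw [norm_mul] at hle
    have hpos : (0:ℝ) < ‖A.det‖ := norm_pos_iff.mpr hdetp
    rw [hVji]
    exact le_of_mul_le_mul_left (by rw [mul_one]; exact hle) hpos
  -- rows of V at selected indices give the identity
  have hVrow : ∀ k i, V (p k) i = (1 : Matrix (Fin m) (Fin m) ℂ) k i := by
    intro k i
    have hAAinv : A * A⁻¹ = 1 := Matrix.mul_nonsing_inv A (isUnit_iff_ne_zero.mpr hdetp)
    calc V (p k) i = (A * A⁻¹) k i := by
          simp [hV, Matrix.mul_apply, hA, Matrix.submatrix_apply]
      _ = (1 : Matrix (Fin m) (Fin m) ℂ) k i := by rw [hAAinv]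
  set g : Fin n → ℂ := f - (U * Uᴴ) *ᵥ f with hg
  set h : Fin n → ℂ := (U * A⁻¹ * Sstarᵀ) *ᵥ g with hh
  -- rewrite LHS vector
  have hPQ : U * A⁻¹ * Sstarᵀ * (U * Uᴴ) = U * Uᴴ := by
    have h1 : A⁻¹ * A = 1 := Matrix.nonsing_inv_mul A (isUnit_iff_ne_zero.mpr hdetp)
    rw [Matrix.mul_assoc (U * A⁻¹) Sstarᵀ (U * Uᴴ), ← Matrix.mul_assoc Sstarᵀ U Uᴴ, hSU,
      ← Matrix.mul_assoc (U * A⁻¹) A Uᴴ, Matrix.mul_assoc U A⁻¹ A, h1, Matrix.mul_one]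
  have hfP : f - (U * A⁻¹ * Sstarᵀ) *ᵥ f = g - h := by
    rw [hh, hg, Matrix.mulVec_sub, Matrix.mulVec_mulVec, hPQ]
    abel
  rw [hfP]
  -- h = V *ᵥ w
  set w : Fin m → ℂ := fun i => g (p i) with hw
  have hSg : Sstarᵀ *ᵥ g = w := by
    funext i
    simp only [Matrix.mulVec, dotProduct, Matrix.transpose_apply, hS, Matrix.of_apply,
      ite_mul, one_mul, zero_mul]
    simp [hw]
  have hhV : h = V *ᵥ w := by
    rw [← hSg, Matrix.mulVec_mulVec, hh, hV]
  have hsel : ∀ k, h (p k) = w k := by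
    intro k
    rw [hhV]
    simp only [Matrix.mulVec, dotProduct]
    calc ∑ i, V (p k) i * w i = ∑ i, (1 : Matrix (Fin m) (Fin m) ℂ) k i * w i := by
          refine Finset.sum_congr rfl fun i _ => by rw [hVrow k i]
      _ = w k := by simp [Matrix.one_apply, Finset.sum_ite_eq]
  -- numeric part
  set sel : Finset (Fin n) := Finset.image p Finset.univ with hselset
  have hcard : (selᶜ).card = n - m := by
    rw [Finset.card_compl, Finset.card_image_of_injective _ hinj]
    simp
  set a2 : ℝ := ∑ k, ‖w k‖^2 with ha2
  set b2 : ℝ := ∑ j ∈ selᶜ, ‖g j‖^2 with hb2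
  set c : ℝ := ∑ k, ‖w k‖ with hc
  set s : ℝ := ∑ j ∈ selᶜ, ‖g j‖ with hs
  have ha2nn : 0 ≤ a2 := Finset.sum_nonneg fun _ _ => sq_nonneg _
  have hb2nn : 0 ≤ b2 := Finset.sum_nonneg fun _ _ => sq_nonneg _
  have hcnn : 0 ≤ c := Finset.sum_nonneg fun _ _ => norm_nonneg _
  have hsnn : 0 ≤ s := Finset.sum_nonneg fun _ _ => norm_nonneg _
  have hc2 : c^2 ≤ (m:ℝ) * a2 := by
    have := sq_sum_le_card_mul_sum_sq (s := (Finset.univ : Finset (Fin m)))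
      (f := fun k => ‖w k‖)
    simpa [ha2, hc] using this
  have hs2 : s^2 ≤ ((n - m : ℕ):ℝ) * b2 := by
    have := sq_sum_le_card_mul_sum_sq (s := selᶜ) (f := fun j => ‖g j‖)
    rw [hcard] at this
    simpa [hb2, hs] using this
  have hsplit : ∑ j, ‖g j‖^2 = a2 + b2 := by
    rw [← Finset.sum_add_sum_compl sel (fun j => ‖g j‖^2)]
    congr 1
    rw [hselset, Finset.sum_image (fun x _ y _ hxy => hinj hxy)]
  have hhc : ∀ j, ‖h j‖ ≤ c := by
    intro j
    have hj : h j = ∑ i, V j i * w i := by rw [hhV]; rfl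
    rw [hj, hc]
    calc ‖∑ i, V j i * w i‖ ≤ ∑ i, ‖V j i * w i‖ := norm_sum_le _ _
      _ ≤ ∑ i, ‖w i‖ := Finset.sum_le_sum fun i _ => by
          rw [norm_mul]
          exact mul_le_of_le_one_left (norm_nonneg _) (hVb j i)
  have hzero : ∀ j ∈ sel, g j - h j = 0 := by
    intro j hj
    obtain ⟨k, -, rfl⟩ := Finset.mem_image.mp hj
    rw [hsel k]
    simp [hw]
  have htot : ∑ j, ‖(g - h) j‖^2 = ∑ j ∈ selᶜ, ‖g j - h j‖^2 := by
    rw [← Finset.sum_add_sum_compl sel (fun j => ‖(g - h) j‖^2)]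
    have hz : ∑ j ∈ sel, ‖(g - h) j‖^2 = 0 := Finset.sum_eq_zero fun j hj => by
      rw [Pi.sub_apply, hzero j hj]
      simp
    rw [hz, zero_add]
    exact Finset.sum_congr rfl fun j _ => by rw [Pi.sub_apply]
  have hpt : ∀ j ∈ selᶜ, ‖g j - h j‖^2 ≤ (‖g j‖ + c)^2 := fun j _ => by
    have h1 : ‖g j - h j‖ ≤ ‖g j‖ + c :=
      (norm_sub_le _ _).trans (add_le_add le_rfl (hhc j))
    exact pow_le_pow_left₀ (norm_nonneg _) h1 2
  have hexp : ∑ j ∈ selᶜ, (‖g j‖ + c)^2 = b2 + 2*c*s + ((n-m:ℕ):ℝ)*c^2 := by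
    have he : ∀ j, (‖g j‖ + c)^2 = ‖g j‖^2 + (2*c)*‖g j‖ + c^2 := fun j => by ring
    simp_rw [he]
    rw [Finset.sum_add_distrib, Finset.sum_add_distrib, ← Finset.mul_sum, Finset.sum_const,
      hcard, nsmul_eq_mul, ← hb2, ← hs]
  have hNr1 : (1:ℝ) ≤ ((n - m : ℕ):ℝ) := by
    have : 1 ≤ n - m := by omega
    exact_mod_cast this
  have hMrnn : (0:ℝ) ≤ (m:ℝ) := Nat.cast_nonneg m
  have hNrnn : (0:ℝ) ≤ ((n - m : ℕ):ℝ) := Nat.cast_nonneg _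
  have hkey : b2 + 2*c*s + ((n-m:ℕ):ℝ)*c^2 ≤ (1 + (m:ℝ)*((n-m:ℕ):ℝ))*(a2+b2) :=
    key_numeric_ineq (m:ℝ) ((n-m:ℕ):ℝ) a2 b2 c s ha2nn hb2nn hcnn hsnn hMrnn hNrnn hc2 hs2
  have hcast : ((n - m : ℕ):ℝ) = (n:ℝ) - m := by
    rw [Nat.cast_sub hmn.le]
  have hfinal : ∑ j, ‖(g - h) j‖^2 ≤ (1 + (m:ℝ)*((n:ℝ) - m)) * (a2 + b2) := by
    rw [htot, ← hcast]
    calc ∑ j ∈ selᶜ, ‖g j - h j‖^2 ≤ ∑ j ∈ selᶜ, (‖g j‖ + c)^2 := Finset.sum_le_sum hpt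
      _ = b2 + 2*c*s + ((n-m:ℕ):ℝ)*c^2 := hexp
      _ ≤ (1 + (m:ℝ)*((n-m:ℕ):ℝ))*(a2+b2) := hkey
  have h1K : (0:ℝ) ≤ 1 + (m:ℝ)*((n:ℝ) - m) := by
    rw [← hcast]; positivity
  calc evNorm (g - h) = Real.sqrt (∑ j, ‖(g - h) j‖^2) := rfl
    _ ≤ Real.sqrt ((1 + (m:ℝ)*((n:ℝ) - m)) * (a2 + b2)) := Real.sqrt_le_sqrt hfinal
    _ = Real.sqrt (1 + (m:ℝ)*((n:ℝ) - m)) * Real.sqrt (a2 + b2) := Real.sqrt_mul h1K _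
    _ = Real.sqrt (1 + (m:ℝ)*((n:ℝ) - m)) * evNorm g := by rw [evNorm, hsplit]
end

section
/- Let m ≤ n and let W ∈ ℂ^{m×n}. Then there exist a permutation matrix Π ∈ ℝ^{n×n}, a unitary matrix Q ∈ ℂ^{m×m}, and an upper trapezoidal matrix R ∈ ℂ^{m×n} (i.e., R_{lk} = 0 for l > k) such that WΠ = QR and R satisfies the pivoting dominance property: |R_{ii}|² ≥ Σ_{l=i}^{min(k,m)} |R_{lk}|² for all 1 ≤ i ≤ m and all i ≤ k ≤ n. -/
open Matrix

lemma cpqr_diag {p q : ℕ} (M : Matrix (Fin p) (Fin q) ℂ) (k : Fin q) :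
    (Mᴴ * M) k k = ((∑ l, ‖M l k‖ ^ 2 : ℝ) : ℂ) := by
  simp only [Matrix.mul_apply, conjTranspose_apply]
  push_cast
  congr 1; ext l
  rw [RCLike.star_def, RCLike.conj_mul]
  norm_cast

lemma cpqr_colnorm {p q : ℕ} {Q : Matrix (Fin p) (Fin p) ℂ} (hQ : Qᴴ * Q = 1)
    (M : Matrix (Fin p) (Fin q) ℂ) (k : Fin q) :
    ∑ l, ‖(Q * M) l k‖ ^ 2 = ∑ l, ‖M l k‖ ^ 2 := by
  have h : ((Q * M)ᴴ * (Q * M)) k k = (Mᴴ * M) k k := by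
    rw [conjTranspose_mul, Matrix.mul_assoc, ← Matrix.mul_assoc Qᴴ, hQ, Matrix.one_mul]
  rw [cpqr_diag, cpqr_diag] at h
  exact_mod_cast h

lemma cpqr_householder {p : ℕ} (v : Fin (p + 1) → ℂ) (hv : v ≠ 0) :
    ∃ Q : Matrix (Fin (p + 1)) (Fin (p + 1)) ℂ, Qᴴ * Q = 1 ∧
      ∀ l, (∑ k, star (Q k l) * v k) =
        if l = 0 then ((Real.sqrt (∑ i, ‖v i‖ ^ 2) : ℝ) : ℂ) else 0 := by
  classical
  set vE : EuclideanSpace ℂ (Fin (p + 1)) := (WithLp.equiv 2 _).symm v with hvE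
  have happ : ∀ i, vE i = v i := fun i => rfl
  have hv' : vE ≠ 0 := by
    intro h; apply hv; funext i
    have := congrFun (congrArg (WithLp.equiv 2 _) h) i
    simpa [hvE] using this
  have hnv : ‖vE‖ ≠ 0 := norm_ne_zero_iff.mpr hv'
  set u : EuclideanSpace ℂ (Fin (p + 1)) := ‖vE‖⁻¹ • vE with hu
  have hun : ‖u‖ = 1 := by
    rw [hu, norm_smul, norm_inv, norm_norm]
    exact inv_mul_cancel₀ hnv
  have hortho : Orthonormal ℂ
      (({0} : Set (Fin (p+1))).restrict (fun _ => u)) := by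
    constructor
    · intro i; exact hun
    · intro i j hij
      exact absurd (Subsingleton.elim i j) hij
  obtain ⟨b, hb⟩ := hortho.exists_orthonormalBasis_extension_of_card_eq
    (by simp)
  have hb0 : b 0 = u := hb 0 rfl
  have hnorm : ‖vE‖ = Real.sqrt (∑ i, ‖v i‖ ^ 2) := by
    rw [EuclideanSpace.norm_eq]
    congr 1
  refine ⟨fun i j => b j i, ?_, ?_⟩
  · ext i j
    have h2 := orthonormal_iff_ite.mp b.orthonormal i j
    simp only [PiLp.inner_apply, RCLike.inner_apply] at h2
    simp only [Matrix.mul_apply, conjTranspose_apply, Matrix.one_apply, star_star]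
    rw [← h2]
    show ∑ k, star ((b i).ofLp k) * (b j).ofLp k = _
    exact Finset.sum_congr rfl fun k _ => by rw [RCLike.star_def, mul_comm]
  · intro l
    have key : (∑ k, star (b l k) * v k) = (inner ℂ (b l) vE : ℂ) := by
      rw [PiLp.inner_apply]
      exact Finset.sum_congr rfl fun k _ => by rw [happ, RCLike.inner_apply, RCLike.star_def, mul_comm]
    rw [key]
    have hveq : vE = (‖vE‖ : ℂ) • b 0 := by
      rw [hb0, hu, ← Complex.coe_smul, smul_smul, ← Complex.ofReal_mul,
        mul_inv_cancel₀ hnv]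
      simp
    rw [hveq, inner_smul_right]
    have h3 := orthonormal_iff_ite.mp b.orthonormal l 0
    rw [h3]
    by_cases h : l = 0 <;> simp [h, hnorm]

lemma cpqr_aux (m : ℕ) : ∀ (n : ℕ) (hmn : m ≤ n) (W : Matrix (Fin m) (Fin n) ℂ),
    ∃ (σ : Equiv.Perm (Fin n)) (Q : Matrix (Fin m) (Fin m) ℂ) (R : Matrix (Fin m) (Fin n) ℂ),
      Qᴴ * Q = 1 ∧
      (∀ (l : Fin m) (k : Fin n), (k : ℕ) < (l : ℕ) → R l k = 0) ∧
      W * σ.permMatrix ℂ = Q * R ∧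
      (∀ (i : Fin m) (k : Fin n), (i : ℕ) ≤ (k : ℕ) →
        ∑ l ∈ Finset.univ.filter fun l : Fin m => (i : ℕ) ≤ (l : ℕ) ∧ (l : ℕ) ≤ (k : ℕ),
            ‖R l k‖ ^ 2 ≤ ‖R i (Fin.castLE hmn i)‖ ^ 2) := by
  induction m with
  | zero =>
    intro n hmn W
    refine ⟨1, 1, 0, by simp, fun l => l.elim0, ?_, fun i => i.elim0⟩
    ext l k; exact l.elim0
  | succ m IH =>
    intro n hmn W
    match n, hmn with
    | (n' + 1), hmn =>
    classical
    set cn : Fin (n' + 1) → ℝ := fun k => ∑ l, ‖W l k‖ ^ 2 with hcn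
    obtain ⟨j, -, hj⟩ := Finset.exists_max_image Finset.univ cn ⟨0, Finset.mem_univ 0⟩
    by_cases hz : cn j = 0
    · -- all columns zero
      have hW : W = 0 := by
        ext l k
        have h1 : ‖W l k‖ ^ 2 ≤ cn k :=
          Finset.single_le_sum (f := fun l => ‖W l k‖ ^ 2)
            (fun _ _ => sq_nonneg _) (Finset.mem_univ l)
        have h2 : cn k ≤ 0 := hz ▸ hj k (Finset.mem_univ k)
        have h3 : ‖W l k‖ = 0 := by nlinarith [norm_nonneg (W l k)]
        simpa using h3
      refine ⟨1, 1, 0, by simp, by simp, by simp [hW], ?_⟩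
      intro i k hik
      simp
    · -- main case: pivot column j is nonzero
      set σ₀ : Equiv.Perm (Fin (n' + 1)) := Equiv.swap 0 j with hσ₀
      set W' := W * σ₀.permMatrix ℂ with hW'
      have hW'app : ∀ l k, W' l k = W l (σ₀.symm k) := by
        intro l k
        rw [hW', PEquiv.mul_toMatrix_toPEquiv]
        rfl
      set v : Fin (m + 1) → ℂ := fun l => W' l 0 with hv
      have hv0 : ∀ l, v l = W l j := by
        intro l
        show W' l 0 = W l j
        rw [hW'app]
        congr 1
      have hcnj : cn j = ∑ l, ‖v l‖ ^ 2 := by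
        rw [hcn]
        exact Finset.sum_congr rfl fun l _ => by rw [hv0]
      have hvne : v ≠ 0 := by
        intro h
        apply hz
        rw [hcnj, h]
        simp
      obtain ⟨Q₀, hQ₀u, hQ₀v⟩ := cpqr_householder v hvne
      set r : ℝ := Real.sqrt (∑ i, ‖v i‖ ^ 2) with hr
      have hrnn : 0 ≤ r := Real.sqrt_nonneg _
      have hr2 : r ^ 2 = cn j := by
        rw [hr, Real.sq_sqrt (Finset.sum_nonneg fun _ _ => sq_nonneg _), hcnj]
      set B := Q₀ᴴ * W' with hB
      have hB0 : ∀ l, B l 0 = if l = 0 then (r : ℂ) else 0 := by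
        intro l
        rw [hB, Matrix.mul_apply]
        simp only [conjTranspose_apply]
        exact hQ₀v l
      set W₁ : Matrix (Fin m) (Fin n') ℂ := fun i k => B i.succ k.succ with hW₁
      obtain ⟨σ₁, Q₁, R₁, hQ₁u, hR₁tz, hfac₁, hdom₁⟩ :=
        IH n' (Nat.succ_le_succ_iff.mp hmn) W₁
      set σ' : Equiv.Perm (Fin (n' + 1)) := Equiv.Perm.decomposeFin.symm (0, σ₁) with hσ'
      have hσ's : ∀ k, σ' k.succ = (σ₁ k).succ := by
        intro k; simp [hσ']
      have hσ'inv0 : σ'.symm 0 = 0 := by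
        rw [show (0 : Fin (n'+1)) = σ' 0 by simp [hσ'], Equiv.symm_apply_apply]
        simp [hσ']
      have hσ'invs : ∀ k, σ'.symm k.succ = (σ₁.symm k).succ := by
        intro k
        apply σ'.injective
        rw [Equiv.apply_symm_apply, hσ's, Equiv.apply_symm_apply]
      set Q₁' : Matrix (Fin (m + 1)) (Fin (m + 1)) ℂ :=
        Matrix.of (Fin.cons (Fin.cons 1 (fun _ => 0)) (fun i => Fin.cons 0 (Q₁ i))) with hQ₁'
      set R : Matrix (Fin (m + 1)) (Fin (n' + 1)) ℂ :=
        Matrix.of (Fin.cons (Fin.cons (r : ℂ) (fun k => B 0 ((σ₁.symm k).succ)))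
          (fun i => Fin.cons 0 (R₁ i))) with hRdef
      -- entry lemmas for Q₁' and R
      have hQ'00 : Q₁' 0 0 = 1 := rfl
      have hQ'0s : ∀ k : Fin m, Q₁' 0 k.succ = 0 := fun k => by
        simp [hQ₁', Matrix.of_apply, Fin.cons_zero, Fin.cons_succ]
      have hQ's0 : ∀ i : Fin m, Q₁' i.succ 0 = 0 := fun i => by
        simp [hQ₁', Matrix.of_apply, Fin.cons_zero, Fin.cons_succ]
      have hQ'ss : ∀ (i k : Fin m), Q₁' i.succ k.succ = Q₁ i k := fun i k => by
        simp [hQ₁', Matrix.of_apply, Fin.cons_zero, Fin.cons_succ]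
      have hR00 : R 0 0 = (r : ℂ) := rfl
      have hR0s : ∀ k : Fin n', R 0 k.succ = B 0 ((σ₁.symm k).succ) := fun k => by
        simp [hRdef, Matrix.of_apply, Fin.cons_zero, Fin.cons_succ]
      have hRs0 : ∀ i : Fin m, R i.succ 0 = 0 := fun i => by
        simp [hRdef, Matrix.of_apply, Fin.cons_zero, Fin.cons_succ]
      have hRss : ∀ (i : Fin m) (k : Fin n'), R i.succ k.succ = R₁ i k := fun i k => by
        simp [hRdef, Matrix.of_apply, Fin.cons_zero, Fin.cons_succ]
      -- unitarity of Q₁'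
      have hQ₁'u : Q₁'ᴴ * Q₁' = 1 := by
        ext i k
        rw [Matrix.mul_apply]
        simp only [conjTranspose_apply]
        rw [Fin.sum_univ_succ]
        induction i using Fin.cases with
        | zero =>
          induction k using Fin.cases with
          | zero => simp [hQ'00, hQ'0s, hQ's0, Matrix.one_apply]
          | succ k' => simp [hQ'00, hQ'0s, hQ's0, hQ'ss, Matrix.one_apply,
              (Fin.succ_ne_zero k').symm]
        | succ i' =>
          induction k using Fin.cases with
          | zero => simp [hQ'00, hQ'0s, hQ's0, hQ'ss, Matrix.one_apply, Fin.succ_ne_zero]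
          | succ k' =>
            have h1 := congrFun (congrFun hQ₁u i') k'
            rw [Matrix.mul_apply] at h1
            simp only [conjTranspose_apply] at h1
            simp only [hQ'0s, hQ's0, hQ'ss, star_zero, zero_mul, zero_add]
            rw [h1]
            simp [Matrix.one_apply, Fin.succ_inj]
      -- factorization
      have hQ₀QH : Q₀ * Q₀ᴴ = 1 := mul_eq_one_comm.mp hQ₀u
      have hW'QB : W' = Q₀ * B := by
        rw [hB, ← Matrix.mul_assoc, hQ₀QH, Matrix.one_mul]
      have hperm : (σ' * σ₀).permMatrix ℂ = σ₀.permMatrix ℂ * σ'.permMatrix ℂ := by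
        show ((σ₀.trans σ').toPEquiv.toMatrix : Matrix _ _ ℂ) = _
        rw [Equiv.toPEquiv_trans, PEquiv.toMatrix_trans]
      have hBP : B * σ'.permMatrix ℂ = Q₁' * R := by
        rw [PEquiv.mul_toMatrix_toPEquiv]
        ext l k
        rw [Matrix.submatrix_apply, Matrix.mul_apply, Fin.sum_univ_succ]
        induction l using Fin.cases with
        | zero =>
          induction k using Fin.cases with
          | zero =>
            rw [id_eq, hσ'inv0, hB0, hQ'00, hR00]
            simp [hQ'0s]
          | succ k' =>
            rw [id_eq, hσ'invs, hQ'00, hR0s]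
            simp [hQ'0s]
        | succ l' =>
          induction k using Fin.cases with
          | zero =>
            rw [id_eq, hσ'inv0, hB0, hQ's0]
            simp [hRs0, hQ'ss, if_neg (Fin.succ_ne_zero l')]
          | succ k' =>
            rw [id_eq, hσ'invs]
            have h1 := congrFun (congrFun hfac₁ l') k'
            rw [PEquiv.mul_toMatrix_toPEquiv] at h1
            have h2 : B l'.succ ((σ₁.symm k').succ) = (Q₁ * R₁) l' k' := by
              rw [← h1]; rfl
            rw [h2, Matrix.mul_apply]
            simp [hQ's0, hQ'ss, hRss]
      have hfac : W * (σ' * σ₀).permMatrix ℂ = (Q₀ * Q₁') * R := by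
        rw [hperm, ← Matrix.mul_assoc, ← hW', hW'QB, Matrix.mul_assoc, hBP,
          ← Matrix.mul_assoc]
      have hQu : (Q₀ * Q₁')ᴴ * (Q₀ * Q₁') = 1 := by
        rw [conjTranspose_mul, Matrix.mul_assoc, ← Matrix.mul_assoc Q₀ᴴ Q₀ Q₁', hQ₀u,
          Matrix.one_mul, hQ₁'u]
      -- column norm bound
      have hcoln : ∀ k, (∑ l, ‖R l k‖ ^ 2) ≤ r ^ 2 := by
        intro k
        have h1 : ∑ l, ‖((Q₀ * Q₁') * R) l k‖ ^ 2 = ∑ l, ‖R l k‖ ^ 2 :=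
          cpqr_colnorm hQu R k
        rw [← hfac] at h1
        have h2 : ∀ l, (W * (σ' * σ₀).permMatrix ℂ) l k = W l ((σ' * σ₀).symm k) := by
          intro l; rw [PEquiv.mul_toMatrix_toPEquiv]; rfl
        calc ∑ l, ‖R l k‖ ^ 2 = ∑ l, ‖W l ((σ' * σ₀).symm k)‖ ^ 2 := by
              rw [← h1]; exact Finset.sum_congr rfl fun l _ => by rw [h2]
          _ = cn ((σ' * σ₀).symm k) := by rw [hcn]
          _ ≤ cn j := hj _ (Finset.mem_univ _)
          _ = r ^ 2 := hr2.symm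
      -- trapezoidal
      have htz : ∀ (l : Fin (m + 1)) (k : Fin (n' + 1)), (k : ℕ) < (l : ℕ) → R l k = 0 := by
        intro l k hkl
        rcases Fin.eq_zero_or_eq_succ l with rfl | ⟨l', rfl⟩
        · exact absurd hkl (by simp)
        · rcases Fin.eq_zero_or_eq_succ k with rfl | ⟨k', rfl⟩
          · exact hRs0 l'
          · rw [hRss]
            exact hR₁tz l' k' (by simpa [Fin.val_succ, Nat.succ_lt_succ_iff] using hkl)
      refine ⟨σ' * σ₀, Q₀ * Q₁', R, hQu, htz, hfac, ?_⟩
      intro i k hik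
      rcases Fin.eq_zero_or_eq_succ i with rfl | ⟨i', rfl⟩
      · have hcast : (Fin.castLE hmn (0 : Fin (m + 1))) = (0 : Fin (n' + 1)) := rfl
        rw [hcast, hR00, Complex.norm_real]
        rw [Real.norm_eq_abs, sq_abs]
        refine le_trans ?_ (hcoln k)
        exact Finset.sum_le_sum_of_subset_of_nonneg (Finset.filter_subset _ _)
          (fun _ _ _ => sq_nonneg _)
      · rcases Fin.eq_zero_or_eq_succ k with rfl | ⟨k', rfl⟩
        · exact absurd hik (by simp [Fin.val_succ])
        · have hik' : (i' : ℕ) ≤ (k' : ℕ) := by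
            simpa [Fin.val_succ, Nat.succ_le_succ_iff] using hik
          have hcast : Fin.castLE hmn (Fin.succ i') =
              Fin.succ (Fin.castLE (Nat.succ_le_succ_iff.mp hmn) i') := by
            ext; simp
          rw [hcast, hRss]
          refine le_trans (le_of_eq ?_) (hdom₁ i' k' hik')
          rw [Finset.sum_filter, Finset.sum_filter, Fin.sum_univ_succ]
          rw [if_neg (by simp [Fin.val_succ]), zero_add]
          refine Finset.sum_congr rfl fun l' _ => ?_
          rw [hRss]
          simp only [Fin.val_succ, Nat.add_le_add_iff_right]

/-- Businger–Golub column-pivoted QR: `WΠ = QR` with `Q` unitary, `R` upper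
trapezoidal satisfying the pivoting dominance property. -/
theorem column_pivoted_qr_exists {m n : ℕ} (hmn : m ≤ n) (W : Matrix (Fin m) (Fin n) ℂ) :
    ∃ (σ : Equiv.Perm (Fin n)) (Q : Matrix (Fin m) (Fin m) ℂ) (R : Matrix (Fin m) (Fin n) ℂ),
      Qᴴ * Q = 1 ∧
      (∀ (l : Fin m) (k : Fin n), (k : ℕ) < (l : ℕ) → R l k = 0) ∧
      W * σ.permMatrix ℂ = Q * R ∧
      (∀ (i : Fin m) (k : Fin n), (i : ℕ) ≤ (k : ℕ) →
        ∑ l ∈ Finset.univ.filter fun l : Fin m => (i : ℕ) ≤ (l : ℕ) ∧ (l : ℕ) ≤ (k : ℕ),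
            ‖R l k‖ ^ 2 ≤ ‖R i (Fin.castLE hmn i)‖ ^ 2) := by
  exact cpqr_aux m n hmn W
end

section
/- Let T ∈ ℂ^{m×m} be upper triangular with nonzero diagonal entries, satisfying the dominance property |T_{ii}|² ≥ Σ_{l=i}^{k} |T_{lk}|² for all 1 ≤ i ≤ k ≤ m. Then the entries of T⁻¹ satisfy: (T⁻¹)_{ji} = 0 for j > i, |(T⁻¹)_{ii}| = 1/|T_{ii}| for all i, and |(T⁻¹)_{ji}| ≤ 2^{i−1−j}/|T_{ii}| for all 1 ≤ j ≤ i−1. -/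
open Matrix

/-- Entrywise bounds on the inverse of an upper triangular matrix with the
column dominance property: `(T⁻¹)_{ji} = 0` for `j > i`,
`|(T⁻¹)_{ii}| = 1/|T_{ii}|`, and `|(T⁻¹)_{ji}| ≤ 2^{i−1−j}/|T_{ii}|` for `j < i`
(indices written 0-based, so the exponent is `i − 1 − j` in 0-based form). -/
theorem inv_triangular_dominance_entry_bounds {m : ℕ} (T : Matrix (Fin m) (Fin m) ℂ)
    (htri : ∀ l k : Fin m, (k : ℕ) < (l : ℕ) → T l k = 0)
    (hdiag : ∀ i : Fin m, T i i ≠ 0)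
    (hdom : ∀ i k : Fin m, (i : ℕ) ≤ (k : ℕ) →
      ∑ l ∈ Finset.univ.filter fun l : Fin m => (i : ℕ) ≤ (l : ℕ) ∧ (l : ℕ) ≤ (k : ℕ),
          ‖T l k‖ ^ 2 ≤ ‖T i i‖ ^ 2) :
    (∀ j i : Fin m, (i : ℕ) < (j : ℕ) → T⁻¹ j i = 0) ∧
    (∀ i : Fin m, ‖T⁻¹ i i‖ = 1 / ‖T i i‖) ∧
    (∀ j i : Fin m, (j : ℕ) < (i : ℕ) →
      ‖T⁻¹ j i‖ ≤ 2 ^ ((i : ℕ) - 1 - (j : ℕ)) / ‖T i i‖) := by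
  classical
  have hbt : T.BlockTriangular id := by
    intro l k h
    exact htri l k (by exact_mod_cast h)
  have hdet : IsUnit T.det := by
    rw [Matrix.det_of_upperTriangular hbt]
    exact (Finset.prod_ne_zero_iff.2 fun i _ => hdiag i).isUnit
  haveI : Invertible T := T.invertibleOfIsUnitDet hdet
  have hinvt : T⁻¹.BlockTriangular id := blockTriangular_inv_of_blockTriangular hbt
  have hzero : ∀ j i : Fin m, (i : ℕ) < (j : ℕ) → T⁻¹ j i = 0 := by
    intro j i h
    exact hinvt (show (id i : Fin m) < id j by exact_mod_cast h)
  have hA : T⁻¹ * T = 1 := Matrix.nonsing_inv_mul T hdet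
  -- key identity
  have key : ∀ j i : Fin m, (j : ℕ) ≤ (i : ℕ) →
      T⁻¹ j i * T i i = (if j = i then 1 else 0) -
        ∑ k ∈ Finset.univ.filter (fun k : Fin m => (j : ℕ) ≤ (k : ℕ) ∧ (k : ℕ) < (i : ℕ)),
          T⁻¹ j k * T k i := by
    intro j i hji
    have h1 : ∑ k, T⁻¹ j k * T k i = (if j = i then (1 : ℂ) else 0) := by
      have := congrFun (congrFun hA j) i
      simpa [Matrix.mul_apply, Matrix.one_apply] using this
    have h2 : ∑ k ∈ Finset.univ.filter
        (fun k : Fin m => (j : ℕ) ≤ (k : ℕ) ∧ (k : ℕ) ≤ (i : ℕ)), T⁻¹ j k * T k i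
        = ∑ k, T⁻¹ j k * T k i := by
      apply Finset.sum_subset (Finset.subset_univ _)
      intro k _ hk
      simp only [Finset.mem_filter, Finset.mem_univ, true_and, not_and, not_le] at hk
      by_cases h : (k : ℕ) < (j : ℕ)
      · rw [hzero j k h, zero_mul]
      · push_neg at h
        rw [htri k i (hk h), mul_zero]
    have hmem : i ∈ Finset.univ.filter
        (fun k : Fin m => (j : ℕ) ≤ (k : ℕ) ∧ (k : ℕ) ≤ (i : ℕ)) := by
      simp only [Finset.mem_filter, Finset.mem_univ, true_and]
      exact ⟨hji, le_rfl⟩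
    have h3 := Finset.add_sum_erase _ (fun k : Fin m => T⁻¹ j k * T k i) hmem
    have herase : (Finset.univ.filter
        (fun k : Fin m => (j : ℕ) ≤ (k : ℕ) ∧ (k : ℕ) ≤ (i : ℕ))).erase i
        = Finset.univ.filter (fun k : Fin m => (j : ℕ) ≤ (k : ℕ) ∧ (k : ℕ) < (i : ℕ)) := by
      ext k
      simp only [Finset.mem_erase, Finset.mem_filter, Finset.mem_univ, true_and, ne_eq,
        Fin.ext_iff]
      omega
    rw [herase] at h3
    rw [← h1, ← h2, ← h3]
    ring
  -- diagonal
  have hdiaginv : ∀ i : Fin m, T⁻¹ i i * T i i = 1 := by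
    intro i
    have h := key i i le_rfl
    have he : Finset.univ.filter (fun k : Fin m => (i : ℕ) ≤ (k : ℕ) ∧ (k : ℕ) < (i : ℕ))
        = ∅ := by
      apply Finset.filter_false_of_mem
      intro k _
      omega
    rw [he] at h
    simpa using h
  have hdiagnorm : ∀ i : Fin m, ‖T⁻¹ i i‖ = 1 / ‖T i i‖ := by
    intro i
    have h := congrArg norm (hdiaginv i)
    rw [norm_mul, norm_one] at h
    rw [mul_comm] at h
    exact eq_one_div_of_mul_eq_one_right h
  -- column entries dominated by diagonal
  have hcol : ∀ k i : Fin m, (k : ℕ) ≤ (i : ℕ) → ‖T k i‖ ≤ ‖T k k‖ := by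
    intro k i hki
    have h1 := hdom k i hki
    have h2 : ‖T k i‖ ^ 2 ≤ ∑ l ∈ Finset.univ.filter
        (fun l : Fin m => (k : ℕ) ≤ (l : ℕ) ∧ (l : ℕ) ≤ (i : ℕ)), ‖T l i‖ ^ 2 := by
      apply Finset.single_le_sum (f := fun l : Fin m => ‖T l i‖ ^ 2)
      · intro l _; positivity
      · simp only [Finset.mem_filter, Finset.mem_univ, true_and]
        exact ⟨le_rfl, hki⟩
    have := h2.trans h1
    nlinarith [norm_nonneg (T k i), norm_nonneg (T k k)]
  -- the weight function
  set g : ℕ → ℝ := fun d => if d = 0 then 1 else 2 ^ (d - 1) with hg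
  have hgnonneg : ∀ d, 0 ≤ g d := by
    intro d; simp only [hg]; split <;> positivity
  have hgsum : ∀ d : ℕ, 1 ≤ d → ∑ t ∈ Finset.range d, g t = g d := by
    intro d hd
    induction d with
    | zero => omega
    | succ n ih =>
      rcases Nat.eq_or_lt_of_le hd with h | h
      · simp [← h, hg]
      · have hn : 1 ≤ n := by omega
        rw [Finset.sum_range_succ, ih hn]
        simp only [hg, if_neg (by omega : n ≠ 0), if_neg (by omega : n + 1 ≠ 0)]
        have : n + 1 - 1 = (n - 1) + 1 := by omega
        rw [this, pow_succ]
        ring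
  -- main induction
  have main : ∀ d : ℕ, ∀ j i : Fin m, (i : ℕ) = (j : ℕ) + d →
      ‖T⁻¹ j i‖ * ‖T i i‖ ≤ g d := by
    intro d
    induction d using Nat.strong_induction_on with
    | _ d ih =>
      intro j i hd
      rcases Nat.eq_zero_or_pos d with rfl | hdpos
      · have : j = i := Fin.ext (by omega)
        subst this
        rw [← norm_mul, hdiaginv j, norm_one]
        simp [hg]
      · have hji : (j : ℕ) < (i : ℕ) := by omega
        have hne : j ≠ i := by
          intro h; subst h; omega
        have hk := key j i (le_of_lt hji)
        rw [if_neg hne, zero_sub] at hk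
        have hb : ‖T⁻¹ j i‖ * ‖T i i‖ ≤ ∑ k ∈ Finset.univ.filter
            (fun k : Fin m => (j : ℕ) ≤ (k : ℕ) ∧ (k : ℕ) < (i : ℕ)), g ((k : ℕ) - (j : ℕ)) := by
          calc ‖T⁻¹ j i‖ * ‖T i i‖ = ‖T⁻¹ j i * T i i‖ := (norm_mul _ _).symm
            _ = ‖∑ k ∈ Finset.univ.filter
                (fun k : Fin m => (j : ℕ) ≤ (k : ℕ) ∧ (k : ℕ) < (i : ℕ)),
                T⁻¹ j k * T k i‖ := by rw [hk, norm_neg]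
            _ ≤ ∑ k ∈ Finset.univ.filter
                (fun k : Fin m => (j : ℕ) ≤ (k : ℕ) ∧ (k : ℕ) < (i : ℕ)),
                ‖T⁻¹ j k * T k i‖ := norm_sum_le _ _
            _ ≤ _ := by
                apply Finset.sum_le_sum
                intro k hkmem
                simp only [Finset.mem_filter, Finset.mem_univ, true_and] at hkmem
                obtain ⟨hjk, hki⟩ := hkmem
                rw [norm_mul]
                have h1 : ‖T k i‖ ≤ ‖T k k‖ := hcol k i (le_of_lt hki)
                have h2 : ‖T⁻¹ j k‖ * ‖T k k‖ ≤ g ((k : ℕ) - (j : ℕ)) := by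
                  apply ih ((k : ℕ) - (j : ℕ)) (by omega) j k (by omega)
                calc ‖T⁻¹ j k‖ * ‖T k i‖ ≤ ‖T⁻¹ j k‖ * ‖T k k‖ :=
                      mul_le_mul_of_nonneg_left h1 (norm_nonneg _)
                  _ ≤ g ((k : ℕ) - (j : ℕ)) := h2
        have hsum : ∑ k ∈ Finset.univ.filter
            (fun k : Fin m => (j : ℕ) ≤ (k : ℕ) ∧ (k : ℕ) < (i : ℕ)), g ((k : ℕ) - (j : ℕ))
            = ∑ t ∈ Finset.range d, g t := by
          refine Finset.sum_nbij' (fun k : Fin m => (k : ℕ) - (j : ℕ))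
            (fun t => ⟨((j : ℕ) + t) % m, Nat.mod_lt _ i.pos⟩) ?_ ?_ ?_ ?_ ?_
          · intro k hkmem
            simp only [Finset.mem_filter, Finset.mem_univ, true_and] at hkmem
            simp only [Finset.mem_range]
            omega
          · intro t ht
            simp only [Finset.mem_range] at ht
            have hlt : (j : ℕ) + t < m := by omega
            simp only [Finset.mem_filter, Finset.mem_univ, true_and,
              Nat.mod_eq_of_lt hlt]
            omega
          · intro k hkmem
            simp only [Finset.mem_filter, Finset.mem_univ, true_and] at hkmem
            have heq : (j : ℕ) + ((k : ℕ) - (j : ℕ)) = (k : ℕ) := by omega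
            apply Fin.ext
            simp [heq, Nat.mod_eq_of_lt k.isLt]
          · intro t ht
            simp only [Finset.mem_range] at ht
            have hlt : (j : ℕ) + t < m := by omega
            simp [Nat.mod_eq_of_lt hlt]
          · intro k hkmem
            rfl
        rw [hsum] at hb
        rw [hgsum d hdpos] at hb
        exact hb
  refine ⟨hzero, hdiagnorm, ?_⟩
  intro j i hji
  have h := main ((i : ℕ) - (j : ℕ)) j i (by omega)
  have hg' : g ((i : ℕ) - (j : ℕ)) = 2 ^ ((i : ℕ) - 1 - (j : ℕ)) := by
    simp only [hg, if_neg (by omega : (i : ℕ) - (j : ℕ) ≠ 0)]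
    congr 1
    omega
  rw [hg'] at h
  have hpos : 0 < ‖T i i‖ := norm_pos_iff.mpr (hdiag i)
  rw [le_div_iff₀ hpos]
  exact h
end

section
/- Let T ∈ ℂ^{m×m} be upper triangular with nonzero diagonal entries, satisfying the dominance property |T_{ii}|² ≥ Σ_{l=i}^{k} |T_{lk}|² for all 1 ≤ i ≤ k ≤ m, and let D = diag(T_{11}, …, T_{mm}). Then the row-scaled matrix T̆ = D⁻¹T satisfies ‖T̆⁻¹‖_F ≤ √(4^m + 6m − 1)/3, where ‖·‖_F denotes the Frobenius norm. -/
noncomputable def wfun (i k : ℕ) : ℝ := if k < i then 0 else if i = k then 1 else 4 ^ (k - i - 1)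

lemma auxGeom : ∀ n i k : ℕ, i < k → k = i + n →
    ∑ l ∈ Finset.Ioc i k, (2:ℝ) ^ (k - l - 1) = 2 ^ (k - i - 1) := by
  intro n
  induction n with
  | zero => intro i k h he; omega
  | succ n ih =>
    intro i k h he
    by_cases hk : i + 1 = k
    · subst hk
      rw [Nat.Ioc_succ_singleton, Finset.sum_singleton]
      simp
    · have h1 : i + 1 < k := by omega
      have hins : Finset.Ioc i k = insert (i+1) (Finset.Ioc (i+1) k) := by
        ext l; simp [Finset.mem_Ioc, Finset.mem_insert]; omega
      rw [hins, Finset.sum_insert (by simp), ih (i+1) k h1 (by omega)]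
      have e1 : k - (i+1) - 1 = n - 1 := by omega
      have e2 : k - i - 1 = n := by omega
      have hn : 1 ≤ n := by omega
      rw [e1, e2, ← two_mul, ← pow_succ']
      congr 1
      omega

lemma auxReflect (k : ℕ) : ∑ i ∈ Finset.range k, (4:ℝ) ^ (k - i - 1) = ∑ j ∈ Finset.range k, (4:ℝ) ^ j := by
  rw [← Finset.sum_range_reflect (fun j => (4:ℝ) ^ j) k]
  apply Finset.sum_congr rfl
  intro i hi
  congr 1
  omega

lemma auxCol (m k : ℕ) (hk : k < m) :
    ∑ i ∈ Finset.range m, wfun i k = ((4:ℝ) ^ k + 2) / 3 := by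
  have hsub : ∑ i ∈ Finset.range m, wfun i k = ∑ i ∈ Finset.range (k+1), wfun i k := by
    symm
    apply Finset.sum_subset (Finset.range_subset_range.2 hk)
    intro x _ hx
    simp only [Finset.mem_range, not_lt] at hx
    simp [wfun, Nat.lt_of_lt_of_le (Nat.lt_succ_self k) hx]
  rw [hsub, Finset.sum_range_succ]
  have h1 : wfun k k = 1 := by simp [wfun]
  have h2 : ∀ i ∈ Finset.range k, wfun i k = (4:ℝ) ^ (k - i - 1) := by
    intro i hi
    simp only [Finset.mem_range] at hi
    simp [wfun, Nat.not_lt.2 hi.le, Nat.ne_of_lt hi, hi]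
  rw [h1, Finset.sum_congr rfl h2, auxReflect, geom_sum_eq (by norm_num : (4:ℝ) ≠ 1)]
  ring

lemma auxTotal (m : ℕ) :
    ∑ i ∈ Finset.range m, ∑ k ∈ Finset.range m, wfun i k = ((4:ℝ) ^ m + 6 * m - 1) / 9 := by
  rw [Finset.sum_comm]
  have : ∀ k ∈ Finset.range m, ∑ i ∈ Finset.range m, wfun i k = ((4:ℝ) ^ k + 2) / 3 := by
    intro k hk; exact auxCol m k (Finset.mem_range.1 hk)
  rw [Finset.sum_congr rfl this]
  have hg := geom_sum_eq (show (4:ℝ) ≠ 1 by norm_num) m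
  calc ∑ k ∈ Finset.range m, ((4:ℝ) ^ k + 2) / 3
      = ∑ k ∈ Finset.range m, ((4:ℝ) ^ k / 3 + 2 / 3) := by
        apply Finset.sum_congr rfl; intro k _; ring
    _ = (∑ k ∈ Finset.range m, (4:ℝ) ^ k) / 3 + m * (2 / 3) := by
        rw [Finset.sum_add_distrib, Finset.sum_const, Finset.card_range, nsmul_eq_mul,
          Finset.sum_div]
    _ = ((4:ℝ) ^ m + 6 * m - 1) / 9 := by rw [hg]; ring

open Matrix

/-- Frobenius norm of a matrix. -/
noncomputable def frobNorm {a b : ℕ} (A : Matrix (Fin a) (Fin b) ℂ) : ℝ :=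
  Real.sqrt (∑ i, ∑ j, ‖A i j‖ ^ 2)

/-- For upper triangular `T` with the column dominance property and
`D = diag(T₁₁,…,T_mm)`, the row-scaled matrix `T̆ = D⁻¹T` satisfies
`‖T̆⁻¹‖_F ≤ √(4^m+6m−1)/3`. -/
theorem scaled_inv_triangular_frobenius_bound {m : ℕ} (T : Matrix (Fin m) (Fin m) ℂ)
    (htri : ∀ l k : Fin m, (k : ℕ) < (l : ℕ) → T l k = 0)
    (hdiag : ∀ i : Fin m, T i i ≠ 0)
    (hdom : ∀ i k : Fin m, (i : ℕ) ≤ (k : ℕ) →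
      ∑ l ∈ Finset.univ.filter fun l : Fin m => (i : ℕ) ≤ (l : ℕ) ∧ (l : ℕ) ≤ (k : ℕ),
          ‖T l k‖ ^ 2 ≤ ‖T i i‖ ^ 2) :
    frobNorm ((Matrix.diagonal fun i => T i i)⁻¹ * T)⁻¹ ≤
      Real.sqrt ((4 : ℝ) ^ m + 6 * m - 1) / 3 := by
  have hDinv : (Matrix.diagonal fun i : Fin m => T i i)⁻¹
      = Matrix.diagonal fun i => (T i i)⁻¹ := by
    apply Matrix.inv_eq_right_inv
    rw [Matrix.diagonal_mul_diagonal,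
      show (fun i => T i i * (T i i)⁻¹) = fun _ => (1 : ℂ) from
        funext fun i => mul_inv_cancel₀ (hdiag i), Matrix.diagonal_one]
  set B := (Matrix.diagonal fun i : Fin m => T i i)⁻¹ * T with hBdef
  have hB : ∀ i j, B i j = (T i i)⁻¹ * T i j := by
    intro i j
    rw [hBdef, hDinv, Matrix.diagonal_mul]
  have hBd : ∀ i, B i i = 1 := fun i => by rw [hB]; exact inv_mul_cancel₀ (hdiag i)
  have hBt : ∀ i j : Fin m, (j : ℕ) < (i : ℕ) → B i j = 0 := by
    intro i j h
    rw [hB, htri i j h, mul_zero]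
  have hTn : ∀ i j : Fin m, (i : ℕ) ≤ (j : ℕ) → ‖T i j‖ ≤ ‖T i i‖ := by
    intro i j hij
    have h1 : ‖T i j‖ ^ 2 ≤ ‖T i i‖ ^ 2 := by
      refine le_trans ?_ (hdom i j hij)
      apply Finset.single_le_sum (f := fun l : Fin m => ‖T l j‖ ^ 2)
      · intro l _; positivity
      · simp only [Finset.mem_filter, Finset.mem_univ, true_and]
        exact ⟨le_refl _, hij⟩
    exact (pow_le_pow_iff_left₀ (norm_nonneg _) (norm_nonneg _) two_ne_zero).mp h1
  have hBn : ∀ i j : Fin m, ‖B i j‖ ≤ 1 := by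
    intro i j
    rcases lt_or_ge (j : ℕ) (i : ℕ) with h | h
    · rw [hBt i j h]; simp
    · rw [hB, norm_mul, norm_inv]
      have hpos : 0 < ‖T i i‖ := norm_pos_iff.2 (hdiag i)
      calc ‖T i i‖⁻¹ * ‖T i j‖ ≤ ‖T i i‖⁻¹ * ‖T i i‖ :=
            mul_le_mul_of_nonneg_left (hTn i j h) (inv_nonneg.2 hpos.le)
        _ = 1 := inv_mul_cancel₀ hpos.ne'
  have hBtri : B.BlockTriangular id := by
    intro i j hij
    exact hBt i j hij
  have hdet : IsUnit B.det := by
    rw [Matrix.det_of_upperTriangular hBtri]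
    simp [hBd]
  haveI : Invertible B := B.invertibleOfIsUnitDet hdet
  have hBS : B * B⁻¹ = 1 := Matrix.mul_nonsing_inv B hdet
  set S := B⁻¹ with hSdef
  have hSt : ∀ i j : Fin m, (j : ℕ) < (i : ℕ) → S i j = 0 := by
    have h := Matrix.blockTriangular_inv_of_blockTriangular hBtri
    intro i j hij
    exact h hij
  have hSd : ∀ i : Fin m, S i i = 1 := by
    intro i
    have h0 := congrFun (congrFun hBS i) i
    rw [Matrix.mul_apply, Matrix.one_apply_eq] at h0
    rw [Finset.sum_eq_single i] at h0
    · rw [hBd, one_mul] at h0; exact h0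
    · intro l _ hl
      rcases lt_or_gt_of_ne (fun h : (l : ℕ) = (i : ℕ) => hl (Fin.ext h)) with hc | hc
      · rw [hBt i l hc, zero_mul]
      · rw [hSt l i hc, mul_zero]
    · intro h; exact absurd (Finset.mem_univ i) h
  have hrec : ∀ i k : Fin m, (i : ℕ) < (k : ℕ) →
      S i k = -∑ l ∈ Finset.univ.filter
          (fun l : Fin m => (i : ℕ) < (l : ℕ) ∧ (l : ℕ) ≤ (k : ℕ)), B i l * S l k := by
    intro i k hik
    have hne : i ≠ k := fun h => by rw [h] at hik; exact lt_irrefl _ hik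
    have h0 := congrFun (congrFun hBS i) k
    rw [Matrix.mul_apply, Matrix.one_apply_ne hne] at h0
    rw [← Finset.sum_filter_add_sum_filter_not Finset.univ
      (fun l : Fin m => (i : ℕ) < (l : ℕ) ∧ (l : ℕ) ≤ (k : ℕ))] at h0
    have h1 : ∑ l ∈ Finset.univ.filter
        (fun l : Fin m => ¬((i : ℕ) < (l : ℕ) ∧ (l : ℕ) ≤ (k : ℕ))), B i l * S l k = S i k := by
      rw [Finset.sum_eq_single i]
      · rw [hBd, one_mul]
      · intro l hl hne'
        simp only [Finset.mem_filter, Finset.mem_univ, true_and, not_and, not_le] at hl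
        have hvne : (l : ℕ) ≠ (i : ℕ) := fun h => hne' (Fin.ext h)
        by_cases hc : (l : ℕ) < (i : ℕ)
        · rw [hBt i l hc, zero_mul]
        · have hkl : (k : ℕ) < (l : ℕ) := hl (by omega)
          rw [hSt l k hkl, mul_zero]
      · intro h
        exfalso
        apply h
        simp only [Finset.mem_filter, Finset.mem_univ, true_and]
        omega
    rw [h1] at h0
    exact eq_neg_of_add_eq_zero_right h0
  have key : ∀ n : ℕ, ∀ i k : Fin m, (i : ℕ) < (k : ℕ) → (k : ℕ) - (i : ℕ) = n →
      ‖S i k‖ ≤ 2 ^ ((k : ℕ) - (i : ℕ) - 1) := by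
    intro n
    induction n using Nat.strong_induction_on with
    | _ n ih =>
      intro i k hik hn
      rw [hrec i k hik, norm_neg]
      have hterm : ∀ l ∈ Finset.univ.filter
          (fun l : Fin m => (i : ℕ) < (l : ℕ) ∧ (l : ℕ) ≤ (k : ℕ)),
          ‖B i l * S l k‖ ≤ (2 : ℝ) ^ ((k : ℕ) - (l : ℕ) - 1) := by
        intro l hl
        simp only [Finset.mem_filter, Finset.mem_univ, true_and] at hl
        have hSl : ‖S l k‖ ≤ (2 : ℝ) ^ ((k : ℕ) - (l : ℕ) - 1) := by
          rcases eq_or_lt_of_le hl.2 with he | hlt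
          · have hlk : l = k := Fin.ext he
            rw [hlk, hSd]
            simp
          · exact ih ((k : ℕ) - (l : ℕ)) (by omega) l k hlt rfl
        calc ‖B i l * S l k‖ = ‖B i l‖ * ‖S l k‖ := norm_mul _ _
          _ ≤ 1 * ((2 : ℝ) ^ ((k : ℕ) - (l : ℕ) - 1)) :=
              mul_le_mul (hBn i l) hSl (norm_nonneg _) zero_le_one
          _ = _ := one_mul _
      have hsum2 : ∑ l ∈ Finset.univ.filter
          (fun l : Fin m => (i : ℕ) < (l : ℕ) ∧ (l : ℕ) ≤ (k : ℕ)),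
          (2 : ℝ) ^ ((k : ℕ) - (l : ℕ) - 1) = 2 ^ ((k : ℕ) - (i : ℕ) - 1) := by
        have hstep : ∑ l ∈ Finset.univ.filter
            (fun l : Fin m => (i : ℕ) < (l : ℕ) ∧ (l : ℕ) ≤ (k : ℕ)),
            (2 : ℝ) ^ ((k : ℕ) - (l : ℕ) - 1)
            = ∑ l : Fin m, (fun j : ℕ => if (i : ℕ) < j ∧ j ≤ (k : ℕ)
                then (2 : ℝ) ^ ((k : ℕ) - j - 1) else 0) (l : ℕ) := by
          rw [Finset.sum_filter]
        rw [hstep, Fin.sum_univ_eq_sum_range (fun j : ℕ => if (i : ℕ) < j ∧ j ≤ (k : ℕ)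
          then (2 : ℝ) ^ ((k : ℕ) - j - 1) else 0) m, ← Finset.sum_filter]
        have hset : (Finset.range m).filter (fun j => (i : ℕ) < j ∧ j ≤ (k : ℕ))
            = Finset.Ioc (i : ℕ) (k : ℕ) := by
          ext j
          simp only [Finset.mem_filter, Finset.mem_range, Finset.mem_Ioc]
          have := k.isLt
          omega
        rw [hset]
        exact auxGeom ((k : ℕ) - (i : ℕ)) (i : ℕ) (k : ℕ) hik (by omega)
      calc ‖∑ l ∈ Finset.univ.filter
            (fun l : Fin m => (i : ℕ) < (l : ℕ) ∧ (l : ℕ) ≤ (k : ℕ)), B i l * S l k‖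
          ≤ ∑ l ∈ Finset.univ.filter
            (fun l : Fin m => (i : ℕ) < (l : ℕ) ∧ (l : ℕ) ≤ (k : ℕ)), ‖B i l * S l k‖ :=
            norm_sum_le _ _
        _ ≤ ∑ l ∈ Finset.univ.filter
            (fun l : Fin m => (i : ℕ) < (l : ℕ) ∧ (l : ℕ) ≤ (k : ℕ)),
            (2 : ℝ) ^ ((k : ℕ) - (l : ℕ) - 1) := Finset.sum_le_sum hterm
        _ = 2 ^ ((k : ℕ) - (i : ℕ) - 1) := hsum2
  have hsq : ∀ i k : Fin m, ‖S i k‖ ^ 2 ≤ wfun (i : ℕ) (k : ℕ) := by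
    intro i k
    rcases lt_trichotomy ((i : ℕ)) ((k : ℕ)) with h | h | h
    · have hk := key ((k : ℕ) - (i : ℕ)) i k h rfl
      have h2 : ‖S i k‖ ^ 2 ≤ ((2 : ℝ) ^ ((k : ℕ) - (i : ℕ) - 1)) ^ 2 :=
        pow_le_pow_left₀ (norm_nonneg _) hk 2
      refine h2.trans_eq ?_
      rw [wfun, if_neg (by omega), if_neg (by omega), ← pow_mul, mul_comm, pow_mul]
      norm_num
    · have hik : i = k := Fin.ext h
      rw [hik, hSd]
      simp [wfun]
    · rw [hSt i k h]
      simp [wfun, h]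
  have hx0 : (0 : ℝ) ≤ (4 : ℝ) ^ m + 6 * m - 1 := by
    have h4 : (1 : ℝ) ≤ 4 ^ m := one_le_pow₀ (by norm_num)
    have hm : (0 : ℝ) ≤ (m : ℝ) := Nat.cast_nonneg m
    linarith
  have hsum : ∑ i : Fin m, ∑ k : Fin m, ‖S i k‖ ^ 2 ≤ ((4 : ℝ) ^ m + 6 * m - 1) / 9 := by
    calc ∑ i : Fin m, ∑ k : Fin m, ‖S i k‖ ^ 2
        ≤ ∑ i : Fin m, ∑ k : Fin m, wfun (i : ℕ) (k : ℕ) :=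
          Finset.sum_le_sum (fun i _ => Finset.sum_le_sum (fun k _ => hsq i k))
      _ = ∑ i ∈ Finset.range m, ∑ k ∈ Finset.range m, wfun i k := by
          rw [← Fin.sum_univ_eq_sum_range (fun i => ∑ k ∈ Finset.range m, wfun i k) m]
          apply Finset.sum_congr rfl
          intro i _
          rw [← Fin.sum_univ_eq_sum_range (fun k => wfun (i : ℕ) k) m]
      _ = _ := auxTotal m
  rw [frobNorm]
  calc Real.sqrt (∑ i : Fin m, ∑ k : Fin m, ‖S i k‖ ^ 2)
      ≤ Real.sqrt (((4 : ℝ) ^ m + 6 * m - 1) / 9) := Real.sqrt_le_sqrt hsum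
    _ = Real.sqrt ((4 : ℝ) ^ m + 6 * m - 1) / 3 := by
        rw [show (9 : ℝ) = 3 ^ 2 by norm_num, Real.sqrt_div hx0, Real.sqrt_sq (by norm_num)]
end

section
/- Let R ∈ ℂ^{m×n} (m ≤ n) be upper trapezoidal (R_{lk} = 0 for l > k) and let T = R(1:m, 1:m) be its leading m×m block. (i) If T satisfies the dominance property |T_{ii}|² ≥ Σ_{l=i}^{k} |T_{lk}|² for all 1 ≤ i ≤ k ≤ m, then |T_{ii}| ≥ |T_{mm}| for every i, so min_{i=1,…,m} |T_{ii}| = |T_{mm}|. (ii) If moreover RR* = I_m and |R_{mm}| = max_{m ≤ j ≤ n} |R_{mj}|, then |T_{mm}| ≥ 1/√(n − m + 1). -/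
open Matrix

/-- For an upper trapezoidal `R` with leading block `T`:
(i) if `T` has the dominance property then the smallest `|T_{ii}|` is `|T_{mm}|`;
(ii) if moreover the rows of `R` are orthonormal and `|R_{mm}|` is the largest
entry in the trailing part of the last row, then `|T_{mm}| ≥ 1/√(n−m+1)`. -/
theorem trapezoidal_last_diagonal_bounds {m n : ℕ} (hmn : m ≤ n) (hm : 0 < m)
    (R : Matrix (Fin m) (Fin n) ℂ)
    (htrap : ∀ (l : Fin m) (k : Fin n), (k : ℕ) < (l : ℕ) → R l k = 0)
    (T : Matrix (Fin m) (Fin m) ℂ) (hT : T = Matrix.of fun i j => R i (Fin.castLE hmn j))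
    (mlast : Fin m) (hml : (mlast : ℕ) = m - 1) :
    ((∀ i k : Fin m, (i : ℕ) ≤ (k : ℕ) →
        ∑ l ∈ Finset.univ.filter fun l : Fin m => (i : ℕ) ≤ (l : ℕ) ∧ (l : ℕ) ≤ (k : ℕ),
            ‖T l k‖ ^ 2 ≤ ‖T i i‖ ^ 2) →
      ∀ i : Fin m, ‖T mlast mlast‖ ≤ ‖T i i‖) ∧
    (R * Rᴴ = 1 →
      (∀ j : Fin n, m - 1 ≤ (j : ℕ) → ‖R mlast j‖ ≤ ‖T mlast mlast‖) →
      1 / Real.sqrt ((n : ℝ) - m + 1) ≤ ‖T mlast mlast‖) := by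
  constructor
  · intro hdom i
    have hile : (i : ℕ) ≤ (mlast : ℕ) := by
      rw [hml]; exact Nat.le_pred_of_lt i.isLt
    have h1 := hdom i mlast hile
    have h2 : ‖T mlast mlast‖ ^ 2 ≤
        ∑ l ∈ Finset.univ.filter fun l : Fin m => (i : ℕ) ≤ (l : ℕ) ∧ (l : ℕ) ≤ (mlast : ℕ),
          ‖T l mlast‖ ^ 2 := by
      apply Finset.single_le_sum (f := fun l : Fin m => ‖T l mlast‖ ^ 2)
      · intro l _; positivity
      · simp only [Finset.mem_filter, Finset.mem_univ, true_and]
        exact ⟨hile, le_refl _⟩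
    have h3 : ‖T mlast mlast‖ ^ 2 ≤ ‖T i i‖ ^ 2 := le_trans h2 h1
    nlinarith [norm_nonneg (T mlast mlast), norm_nonneg (T i i)]
  · intro horth hmax
    set t := ‖T mlast mlast‖ with ht0
    have ht : 0 ≤ t := norm_nonneg _
    have key : (1 : ℝ) = ∑ j : Fin n, ‖R mlast j‖ ^ 2 := by
      have h0 := congrArg (fun M => M mlast mlast) horth
      simp only [Matrix.mul_apply, Matrix.one_apply_eq, Matrix.conjTranspose_apply] at h0
      have h2 := congrArg Complex.re h0
      rw [Complex.re_sum, Complex.one_re] at h2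
      rw [← h2]
      apply Finset.sum_congr rfl
      intro j _
      rw [RCLike.star_def, Complex.mul_conj]
      simp [Complex.normSq_eq_norm_sq, ← Complex.ofReal_pow]
    set s : Finset (Fin n) := Finset.univ.filter fun j : Fin n => m - 1 ≤ (j : ℕ) with hs
    have hsum : ∑ j : Fin n, ‖R mlast j‖ ^ 2 = ∑ j ∈ s, ‖R mlast j‖ ^ 2 := by
      symm
      apply Finset.sum_subset (Finset.filter_subset _ _)
      intro j _ hj
      have : (j : ℕ) < m - 1 := by
        simp [hs] at hj; omega
      rw [htrap mlast j (by omega)]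
      simp
    have hcard : (s.card : ℝ) = (n : ℝ) - m + 1 := by
      have hlt : m - 1 < n := by omega
      have : s = Finset.Ici (⟨m - 1, hlt⟩ : Fin n) := by
        rw [← Finset.filter_le_eq_Ici]
        apply Finset.filter_congr
        intro j _
        simp [Fin.le_def]
      rw [this, Fin.card_Ici]
      simp only []
      have : n - (m - 1) = n - m + 1 := by omega
      rw [this]
      push_cast [Nat.cast_sub hmn]
      ring
    have hbound : (1 : ℝ) ≤ ((n : ℝ) - m + 1) * t ^ 2 := by
      have hle : ∑ j ∈ s, ‖R mlast j‖ ^ 2 ≤ s.card • (t ^ 2) := by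
        apply Finset.sum_le_card_nsmul
        intro j hj
        have hjm : m - 1 ≤ (j : ℕ) := by simpa [hs] using hj
        exact pow_le_pow_left₀ (norm_nonneg _) (hmax j hjm) 2
      rw [nsmul_eq_mul, hcard] at hle
      calc (1 : ℝ) = ∑ j ∈ s, ‖R mlast j‖ ^ 2 := by rw [key, hsum]
        _ ≤ _ := hle
    have hc1 : (1 : ℝ) ≤ (n : ℝ) - m + 1 := by
      have : (m : ℝ) ≤ n := by exact_mod_cast hmn
      linarith
    set c : ℝ := (n : ℝ) - m + 1
    have hsq : Real.sqrt c ^ 2 = c := Real.sq_sqrt (by linarith)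
    have hspos : 0 < Real.sqrt c := Real.sqrt_pos.mpr (by linarith)
    rw [div_le_iff₀ hspos]
    have h1 : (1 : ℝ) ≤ (t * Real.sqrt c) ^ 2 := by nlinarith [hsq, hbound]
    nlinarith [h1, mul_nonneg ht hspos.le]
end

section
/- Let R ∈ ℂ^{m×n} (m ≤ n) be upper trapezoidal with leading m×m block T = R(1:m, 1:m) having nonzero diagonal entries, satisfying the dominance property |R_{ii}|² ≥ Σ_{l=i}^{min(k,m)} |R_{lk}|² for all 1 ≤ i ≤ m and i ≤ k ≤ n, and let D = diag(T_{11}, …, T_{mm}) and T̆ = D⁻¹T. Then σ_min(T) ≥ σ_min(R) / (√(n − m + 1) · ‖T̆⁻¹‖₂), where σ_min(T) = 1/‖T⁻¹‖₂ and σ_min(R) = min over unit vectors x ∈ ℂᵐ of ‖x*R‖₂. -/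
set_option maxHeartbeats 1000000

open Matrix
open scoped Matrix.Norms.L2Operator

/-- Smallest singular value of `R ∈ ℂ^{m×n}` (`m ≤ n`): the infimum (minimum)
of `‖x*R‖₂` over unit vectors `x ∈ ℂᵐ`. -/
noncomputable def sigmaMinRow {m n : ℕ} (R : Matrix (Fin m) (Fin n) ℂ) : ℝ :=
  sInf {r : ℝ | ∃ x : Fin m → ℂ, evNorm x = 1 ∧ r = evNorm (Matrix.vecMul (star x) R)}

lemma specNorm_eq_norm {a b : ℕ} (A : Matrix (Fin a) (Fin b) ℂ) : specNorm A = ‖A‖ := rfl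

lemma l2norm_diagonal_le {a : ℕ} (w : Fin a → ℂ) (c : ℝ) (hc : 0 ≤ c)
    (h : ∀ i, ‖w i‖ ≤ c) : ‖Matrix.diagonal w‖ ≤ c := by
  have key : ∀ v : EuclideanSpace ℂ (Fin a),
      ‖Matrix.toEuclideanLin (Matrix.diagonal w) v‖ ≤ c * ‖v‖ := by
    intro v
    rw [EuclideanSpace.norm_eq, EuclideanSpace.norm_eq]
    have hv : ∀ i, ‖(Matrix.toEuclideanLin (Matrix.diagonal w) v) i‖ = ‖w i * v i‖ := by
      intro i
      show ‖(Matrix.diagonal w *ᵥ (fun j => v j)) i‖ = _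
      rw [Matrix.mulVec_diagonal]
    calc Real.sqrt (∑ i, ‖(Matrix.toEuclideanLin (Matrix.diagonal w) v) i‖ ^ 2)
        ≤ Real.sqrt (∑ i, c ^ 2 * ‖v i‖ ^ 2) := by
          apply Real.sqrt_le_sqrt
          apply Finset.sum_le_sum
          intro i _
          rw [hv i, norm_mul]
          have h2 : ‖w i‖ * ‖v i‖ ≤ c * ‖v i‖ :=
            mul_le_mul_of_nonneg_right (h i) (norm_nonneg _)
          calc (‖w i‖ * ‖v i‖) ^ 2 ≤ (c * ‖v i‖) ^ 2 :=
                pow_le_pow_left₀ (by positivity) h2 2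
            _ = c ^ 2 * ‖v i‖ ^ 2 := by ring
      _ = c * Real.sqrt (∑ i, ‖v i‖ ^ 2) := by
          rw [← Finset.mul_sum, Real.sqrt_mul (by positivity), Real.sqrt_sq hc]
  rw [Matrix.l2_opNorm_def]
  exact ContinuousLinearMap.opNorm_le_bound _ hc key

/-- For upper trapezoidal `R` with the pivoting dominance property, the leading
block `T` satisfies `σ_min(T) ≥ σ_min(R)/(√(n−m+1)·‖T̆⁻¹‖₂)` where `T̆ = D⁻¹T`
and `σ_min(T) = 1/‖T⁻¹‖₂`. -/
theorem trapezoidal_leading_block_sigma_min_bound {m n : ℕ} (hmn : m ≤ n)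
    (R : Matrix (Fin m) (Fin n) ℂ)
    (htrap : ∀ (l : Fin m) (k : Fin n), (k : ℕ) < (l : ℕ) → R l k = 0)
    (T : Matrix (Fin m) (Fin m) ℂ) (hT : T = Matrix.of fun i j => R i (Fin.castLE hmn j))
    (hdiag : ∀ i : Fin m, T i i ≠ 0)
    (hdom : ∀ (i : Fin m) (k : Fin n), (i : ℕ) ≤ (k : ℕ) →
      ∑ l ∈ Finset.univ.filter fun l : Fin m => (i : ℕ) ≤ (l : ℕ) ∧ (l : ℕ) ≤ (k : ℕ),
          ‖R l k‖ ^ 2 ≤ ‖R i (Fin.castLE hmn i)‖ ^ 2)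
    (D : Matrix (Fin m) (Fin m) ℂ) (hD : D = Matrix.diagonal fun i => T i i) :
    sigmaMinRow R / (Real.sqrt ((n : ℝ) - m + 1) * specNorm ((D⁻¹ * T)⁻¹)) ≤
      1 / specNorm T⁻¹ := by
  rcases Nat.eq_zero_or_pos m with hm | hm
  · -- m = 0 : the set of unit vectors is empty, sInf ∅ = 0
    subst hm
    have hempty : {r : ℝ | ∃ x : Fin 0 → ℂ, evNorm x = 1 ∧
        r = evNorm (Matrix.vecMul (star x) R)} = ∅ := by
      ext r
      simp only [Set.mem_setOf_eq, Set.mem_empty_iff_false, iff_false, not_exists]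
      intro x ⟨hx, _⟩
      simp [evNorm] at hx
    rw [sigmaMinRow, hempty, Real.sInf_empty, zero_div]
    rw [specNorm_eq_norm]
    positivity
  · -- m ≥ 1
    set i₀ : Fin m := ⟨m - 1, by omega⟩ with hi₀
    have hi₀coe : (i₀ : ℕ) = m - 1 := rfl
    set d : ℂ := T i₀ i₀ with hd
    have hTapp : ∀ i j : Fin m, T i j = R i (Fin.castLE hmn j) := by
      intro i j; rw [hT]; rfl
    have hδpos : 0 < ‖d‖ := norm_pos_iff.mpr (hdiag i₀)
    -- diagonal entries dominate the last one
    have hdm : ∀ i : Fin m, ‖d‖ ≤ ‖T i i‖ := by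
      intro i
      have hkle : (i : ℕ) ≤ ((Fin.castLE hmn i₀ : Fin n) : ℕ) := by
        simp only [Fin.coe_castLE]
        omega
      have h := hdom i (Fin.castLE hmn i₀) hkle
      have hmem : i₀ ∈ Finset.univ.filter
          (fun l : Fin m => (i : ℕ) ≤ (l : ℕ) ∧ (l : ℕ) ≤ ((Fin.castLE hmn i₀ : Fin n) : ℕ)) := by
        simp only [Finset.mem_filter, Finset.mem_univ, true_and, Fin.coe_castLE]
        constructor
        · omega
        · omega
      have h1 : ‖R i₀ (Fin.castLE hmn i₀)‖ ^ 2 ≤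
          ∑ l ∈ Finset.univ.filter
            (fun l : Fin m => (i : ℕ) ≤ (l : ℕ) ∧ (l : ℕ) ≤ ((Fin.castLE hmn i₀ : Fin n) : ℕ)),
            ‖R l (Fin.castLE hmn i₀)‖ ^ 2 :=
        Finset.single_le_sum (f := fun l => ‖R l (Fin.castLE hmn i₀)‖ ^ 2)
          (fun l _ => by positivity) hmem
      have h2 : ‖R i₀ (Fin.castLE hmn i₀)‖ ^ 2 ≤ ‖R i (Fin.castLE hmn i)‖ ^ 2 := h1.trans h
      rw [hd, hTapp i₀ i₀, hTapp i i]
      have := Real.sqrt_le_sqrt h2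
      rwa [Real.sqrt_sq (norm_nonneg _), Real.sqrt_sq (norm_nonneg _)] at this
    -- the test vector: last standard basis vector
    set x : Fin m → ℂ := Pi.single i₀ (1 : ℂ) with hx
    have hxnorm : evNorm x = 1 := by
      rw [evNorm]
      have : ∀ i : Fin m, ‖x i‖ ^ 2 = if i = i₀ then 1 else 0 := by
        intro i
        rcases eq_or_ne i i₀ with h | h
        · subst h; simp [hx]
        · simp [hx, Pi.single_apply, h]
      rw [Finset.sum_congr rfl (fun i _ => this i), Finset.sum_ite_eq' Finset.univ i₀ (fun _ => 1)]
      simp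
    have hstar : star x = x := by
      funext i
      rcases eq_or_ne i i₀ with h | h
      · subst h; simp [hx]
      · simp [hx, Pi.single_apply, h]
    have hvec : Matrix.vecMul (star x) R = R i₀ := by
      rw [hstar, hx]
      exact Matrix.single_one_vecMul i₀ R
    have hmemS : evNorm (R i₀) ∈ {r : ℝ | ∃ x : Fin m → ℂ, evNorm x = 1 ∧
        r = evNorm (Matrix.vecMul (star x) R)} :=
      ⟨x, hxnorm, by rw [hvec]⟩
    have hbdd : ∀ r ∈ {r : ℝ | ∃ x : Fin m → ℂ, evNorm x = 1 ∧
        r = evNorm (Matrix.vecMul (star x) R)}, (0 : ℝ) ≤ r := by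
      rintro r ⟨x, _, rfl⟩
      exact Real.sqrt_nonneg _
    have hsle : sigmaMinRow R ≤ evNorm (R i₀) :=
      csInf_le ⟨0, fun r hr => hbdd r hr⟩ hmemS
    have hsnonneg : 0 ≤ sigmaMinRow R := Real.sInf_nonneg hbdd
    -- bound evNorm (R i₀) ≤ √(n-m+1) * ‖d‖
    have hcount : ((Finset.univ.filter fun k : Fin n => (m - 1 : ℕ) ≤ (k : ℕ)).card : ℝ)
        = (n : ℝ) - m + 1 := by
      have hlt : m - 1 < n := by omega
      have : (Finset.univ.filter fun k : Fin n => (m - 1 : ℕ) ≤ (k : ℕ))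
          = Finset.Ici (⟨m - 1, hlt⟩ : Fin n) := by
        ext k
        simp only [Finset.mem_filter, Finset.mem_univ, true_and, Finset.mem_Ici, Fin.le_def]
      rw [this, Fin.card_Ici]
      simp only [Nat.cast_sub (by omega : m - 1 ≤ n)]
      have h1 : ((m - 1 : ℕ) : ℝ) = (m : ℝ) - 1 := by
        rw [Nat.cast_sub (by omega : 1 ≤ m)]; simp
      rw [h1]; ring
    have hbound : evNorm (R i₀) ≤ Real.sqrt ((n : ℝ) - m + 1) * ‖d‖ := by
      rw [evNorm]
      have hsum : ∑ k, ‖R i₀ k‖ ^ 2 ≤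
          ∑ k : Fin n, (if (m - 1 : ℕ) ≤ (k : ℕ) then ‖d‖ ^ 2 else 0) := by
        apply Finset.sum_le_sum
        intro k _
        by_cases hk : (m - 1 : ℕ) ≤ (k : ℕ)
        · simp only [hk, if_true]
          have h := hdom i₀ k hk
          have hmem : i₀ ∈ Finset.univ.filter
              (fun l : Fin m => (i₀ : ℕ) ≤ (l : ℕ) ∧ (l : ℕ) ≤ (k : ℕ)) := by
            simp only [Finset.mem_filter, Finset.mem_univ, true_and]
            exact ⟨le_refl _, hk⟩
          have h1 : ‖R i₀ k‖ ^ 2 ≤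
              ∑ l ∈ Finset.univ.filter
                (fun l : Fin m => (i₀ : ℕ) ≤ (l : ℕ) ∧ (l : ℕ) ≤ (k : ℕ)), ‖R l k‖ ^ 2 :=
            Finset.single_le_sum (f := fun l => ‖R l k‖ ^ 2) (fun l _ => by positivity) hmem
          have h2 := h1.trans h
          rwa [← hTapp i₀ i₀, ← hd] at h2
        · simp only [hk, if_false]
          have : R i₀ k = 0 := htrap i₀ k (by rw [hi₀coe]; omega)
          rw [this]
          simp
      have hcard : ∑ k : Fin n, (if (m - 1 : ℕ) ≤ (k : ℕ) then ‖d‖ ^ 2 else 0)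
          = ((n : ℝ) - m + 1) * ‖d‖ ^ 2 := by
        rw [Finset.sum_ite, Finset.sum_const, Finset.sum_const]
        simp only [nsmul_eq_mul, smul_zero, add_zero]
        rw [hcount]
      calc Real.sqrt (∑ k, ‖R i₀ k‖ ^ 2)
          ≤ Real.sqrt (((n : ℝ) - m + 1) * ‖d‖ ^ 2) := by
            apply Real.sqrt_le_sqrt
            rw [← hcard]; exact hsum
        _ = Real.sqrt ((n : ℝ) - m + 1) * ‖d‖ := by
            rw [Real.sqrt_mul (by
              have : (m : ℝ) ≤ n := Nat.cast_le.mpr hmn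
              linarith), Real.sqrt_sq (norm_nonneg _)]
    -- invertibility facts
    have hbt : T.BlockTriangular id := by
      intro i j hij
      rw [hTapp]
      exact htrap i (Fin.castLE hmn j) (by simpa using hij)
    have hdetT : IsUnit T.det := by
      rw [Matrix.det_of_upperTriangular hbt]
      exact isUnit_iff_ne_zero.mpr (Finset.prod_ne_zero_iff.mpr fun i _ => hdiag i)
    have hdetD : IsUnit D.det := by
      rw [hD, Matrix.det_diagonal]
      exact isUnit_iff_ne_zero.mpr (Finset.prod_ne_zero_iff.mpr fun i _ => hdiag i)
    have hTinv : (D⁻¹ * T)⁻¹ * D⁻¹ = T⁻¹ := by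
      rw [Matrix.mul_inv_rev, Matrix.nonsing_inv_nonsing_inv D hdetD, mul_assoc,
        Matrix.mul_nonsing_inv D hdetD, mul_one]
    have hDinv : D⁻¹ = Matrix.diagonal (fun i => (T i i)⁻¹) := by
      apply Matrix.inv_eq_right_inv
      rw [hD, Matrix.diagonal_mul_diagonal]
      have : (fun i => T i i * (T i i)⁻¹) = fun _ : Fin m => (1 : ℂ) := by
        funext i
        exact mul_inv_cancel₀ (hdiag i)
      rw [this, Matrix.diagonal_one]
    have hnormD : ‖D⁻¹‖ ≤ ‖d‖⁻¹ := by
      rw [hDinv]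
      apply l2norm_diagonal_le _ _ (by positivity)
      intro i
      rw [norm_inv]
      exact inv_anti₀ hδpos (hdm i)
    have hnormT : ‖T⁻¹‖ ≤ ‖(D⁻¹ * T)⁻¹‖ * ‖d‖⁻¹ := by
      calc ‖T⁻¹‖ = ‖(D⁻¹ * T)⁻¹ * D⁻¹‖ := by rw [hTinv]
        _ ≤ ‖(D⁻¹ * T)⁻¹‖ * ‖D⁻¹‖ := Matrix.l2_opNorm_mul _ _
        _ ≤ ‖(D⁻¹ * T)⁻¹‖ * ‖d‖⁻¹ :=
            mul_le_mul_of_nonneg_left hnormD (norm_nonneg _)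
    -- positivity of norms
    have hone : (1 : Matrix (Fin m) (Fin m) ℂ) ≠ 0 := by
      intro h0
      have := congrFun (congrFun h0 i₀) i₀
      simp at this
    have hTinvne : T⁻¹ ≠ 0 := by
      intro h0
      have h1 := Matrix.nonsing_inv_mul T hdetT
      rw [h0, zero_mul] at h1
      exact hone h1.symm
    have hTbinvne : (D⁻¹ * T)⁻¹ ≠ 0 := by
      intro h0
      rw [h0, zero_mul] at hTinv
      exact hTinvne hTinv.symm
    have hposT : 0 < ‖T⁻¹‖ := norm_pos_iff.mpr hTinvne
    have hposTb : 0 < ‖(D⁻¹ * T)⁻¹‖ := norm_pos_iff.mpr hTbinvne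
    have hsqrtpos : 0 < Real.sqrt ((n : ℝ) - m + 1) := by
      apply Real.sqrt_pos.mpr
      have : (m : ℝ) ≤ n := Nat.cast_le.mpr hmn
      linarith
    -- final assembly
    have hdenpos : 0 < Real.sqrt ((n : ℝ) - m + 1) * ‖(D⁻¹ * T)⁻¹‖ :=
      mul_pos hsqrtpos hposTb
    rw [specNorm_eq_norm, specNorm_eq_norm, div_le_div_iff₀ hdenpos hposT]
    calc sigmaMinRow R * ‖T⁻¹‖
        ≤ (Real.sqrt ((n : ℝ) - m + 1) * ‖d‖) * (‖(D⁻¹ * T)⁻¹‖ * ‖d‖⁻¹) := by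
          apply mul_le_mul (hsle.trans hbound) hnormT hposT.le
          exact mul_nonneg hsqrtpos.le (norm_nonneg _)
      _ = Real.sqrt ((n : ℝ) - m + 1) * ‖(D⁻¹ * T)⁻¹‖ * (‖d‖ * ‖d‖⁻¹) := by ring
      _ = Real.sqrt ((n : ℝ) - m + 1) * ‖(D⁻¹ * T)⁻¹‖ * 1 := by
          rw [mul_inv_cancel₀ (ne_of_gt hδpos)]
      _ = 1 * (Real.sqrt ((n : ℝ) - m + 1) * ‖(D⁻¹ * T)⁻¹‖) := by ring
end

section
/- Let R ∈ ℂ^{m×n} (m ≤ n) be upper trapezoidal with RR* = I_m, satisfying the pivoting dominance property |R_{ii}|² ≥ Σ_{l=i}^{min(k,m)} |R_{lk}|² for all 1 ≤ i ≤ m and i ≤ k ≤ n. Then the leading m×m block T = R(1:m, 1:m) is invertible and ‖T⁻¹‖₂ ≤ √(n − m + 1) · √(4^m + 6m − 1)/3. -/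
open Matrix Finset

set_option maxHeartbeats 1000000

lemma aux_sum_two (D : ℕ) :
    ∑ d ∈ Finset.range (D + 1), (2:ℝ) ^ (d - 1) = 2 ^ D := by
  induction D with
  | zero => simp
  | succ D ih => rw [Finset.sum_range_succ, ih, Nat.add_sub_cancel]; ring

lemma aux_sum_four (D : ℕ) :
    ∑ d ∈ Finset.range (D + 1), (4:ℝ) ^ (d - 1) = (4 ^ D + 2) / 3 := by
  induction D with
  | zero => norm_num
  | succ D ih => rw [Finset.sum_range_succ, ih, Nat.add_sub_cancel]; ring

lemma aux_sum_col (m : ℕ) :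
    ∑ j ∈ Finset.range m, ((4:ℝ) ^ j + 2) / 3 = ((4:ℝ) ^ m + 6 * m - 1) / 9 := by
  induction m with
  | zero => norm_num
  | succ m ih => rw [Finset.sum_range_succ, ih]; push_cast; ring

lemma le_of_sq_le_sq' {a b : ℝ} (ha : 0 ≤ a) (hb : 0 ≤ b) (h : a ^ 2 ≤ b ^ 2) : a ≤ b := by
  nlinarith

lemma specNorm_le_frob {a b : ℕ} (A : Matrix (Fin a) (Fin b) ℂ) :
    specNorm A ≤ Real.sqrt (∑ i, ∑ j, ‖A i j‖ ^ 2) := by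
  apply ContinuousLinearMap.opNorm_le_bound _ (Real.sqrt_nonneg _)
  intro x
  have hx : ‖x‖ = Real.sqrt (∑ j, ‖x j‖ ^ 2) := EuclideanSpace.norm_eq x
  have hAx : ∀ i, (LinearMap.toContinuousLinearMap (Matrix.toEuclideanLin A)) x i
      = ∑ j, A i j * x j := fun i => rfl
  have hy : ‖(LinearMap.toContinuousLinearMap (Matrix.toEuclideanLin A)) x‖
      = Real.sqrt (∑ i, ‖∑ j, A i j * x j‖ ^ 2) := by
    rw [EuclideanSpace.norm_eq]
    simp only [hAx]
  rw [hx, hy, ← Real.sqrt_mul (by positivity)]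
  apply Real.sqrt_le_sqrt
  rw [Finset.sum_mul]
  apply Finset.sum_le_sum
  intro i _
  calc ‖∑ j, A i j * x j‖ ^ 2 ≤ (∑ j, ‖A i j‖ * ‖x j‖) ^ 2 := by
        apply pow_le_pow_left₀ (norm_nonneg _)
        exact (norm_sum_le _ _).trans (le_of_eq (by simp [norm_mul]))
    _ ≤ (∑ j, ‖A i j‖ ^ 2) * ∑ j, ‖x j‖ ^ 2 :=
        Finset.sum_mul_sq_le_sq_mul_sq _ _ _

/-- For upper trapezoidal `R` with orthonormal rows satisfying the pivoting
dominance property, the leading `m×m` block `T` is invertible and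
`‖T⁻¹‖₂ ≤ √(n−m+1)·√(4^m+6m−1)/3`. -/
theorem trapezoidal_orthonormal_rows_inv_bound {m n : ℕ} (hmn : m ≤ n)
    (R : Matrix (Fin m) (Fin n) ℂ)
    (htrap : ∀ (l : Fin m) (k : Fin n), (k : ℕ) < (l : ℕ) → R l k = 0)
    (horth : R * Rᴴ = 1)
    (hdom : ∀ (i : Fin m) (k : Fin n), (i : ℕ) ≤ (k : ℕ) →
      ∑ l ∈ Finset.univ.filter fun l : Fin m => (i : ℕ) ≤ (l : ℕ) ∧ (l : ℕ) ≤ (k : ℕ),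
          ‖R l k‖ ^ 2 ≤ ‖R i (Fin.castLE hmn i)‖ ^ 2)
    (T : Matrix (Fin m) (Fin m) ℂ) (hT : T = Matrix.of fun i j => R i (Fin.castLE hmn j)) :
    IsUnit T ∧
      specNorm T⁻¹ ≤
        Real.sqrt ((n : ℝ) - m + 1) * (Real.sqrt ((4 : ℝ) ^ m + 6 * m - 1) / 3) := by
  rcases Nat.eq_zero_or_pos m with hm | hm
  · subst hm
    constructor
    · have h1 : T = 1 := Subsingleton.elim T 1
      exact h1 ▸ isUnit_one
    · have h0 : specNorm T⁻¹ = 0 := by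
        rw [specNorm]
        apply le_antisymm _ (norm_nonneg _)
        apply ContinuousLinearMap.opNorm_le_bound _ le_rfl
        intro x
        have : (LinearMap.toContinuousLinearMap (Matrix.toEuclideanLin T⁻¹)) x = 0 :=
          Subsingleton.elim _ _
        rw [this, norm_zero, zero_mul]
      rw [h0]
      positivity
  -- main case : 0 < m
  subst hT
  set T : Matrix (Fin m) (Fin m) ℂ := Matrix.of fun i j => R i (Fin.castLE hmn j) with hTdef'
  have hTdef : ∀ i j : Fin m, T i j = R i (Fin.castLE hmn j) := fun i j => rfl
  set δ : Fin m → ℝ := fun i => ‖R i (Fin.castLE hmn i)‖ with hδdef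
  have hδ : ∀ i, δ i = ‖T i i‖ := fun i => rfl
  have hδ0 : ∀ i, 0 ≤ δ i := fun i => norm_nonneg _
  -- dominance, single-term form
  have hdom' : ∀ (i : Fin m) (k : Fin n) (l : Fin m), (i:ℕ) ≤ (l:ℕ) → (l:ℕ) ≤ (k:ℕ) →
      ‖R l k‖ ^ 2 ≤ δ i ^ 2 := by
    intro i k l h1 h2
    refine le_trans ?_ (hdom i k (le_trans h1 h2))
    apply Finset.single_le_sum (f := fun l : Fin m => ‖R l k‖ ^ 2)
      (fun _ _ => by positivity)
    simp only [Finset.mem_filter, Finset.mem_univ, true_and]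
    exact ⟨h1, h2⟩
  have hTle : ∀ i l : Fin m, (i:ℕ) ≤ (l:ℕ) → ‖T i l‖ ≤ δ i := by
    intro i l h
    apply le_of_sq_le_sq' (norm_nonneg _) (hδ0 i)
    exact hdom' i (Fin.castLE hmn l) i le_rfl h
  have hmono : ∀ i j : Fin m, (i:ℕ) ≤ (j:ℕ) → δ j ≤ δ i := by
    intro i j h
    apply le_of_sq_le_sq' (hδ0 j) (hδ0 i)
    exact hdom' i (Fin.castLE hmn j) j h le_rfl
  -- rows have unit norm
  have hrow : ∀ i : Fin m, ∑ k, ‖R i k‖ ^ 2 = (1:ℝ) := by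
    intro i
    have h := congrFun (congrFun horth i) i
    rw [Matrix.mul_apply, Matrix.one_apply_eq] at h
    have h2 : ∑ k, ((‖R i k‖ ^ 2 : ℝ) : ℂ) = 1 := by
      rw [← h]
      apply Finset.sum_congr rfl
      intro k _
      rw [Matrix.conjTranspose_apply, RCLike.star_def, RCLike.mul_conj]
      norm_cast
    exact_mod_cast h2
  -- the last diagonal entry bound
  have hK0 : (0:ℝ) ≤ (n:ℝ) - m + 1 := by
    have : (m:ℝ) ≤ (n:ℝ) := by exact_mod_cast hmn
    linarith
  set jl : Fin m := ⟨m - 1, by omega⟩ with hjl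
  have hlast : 1 ≤ ((n:ℝ) - m + 1) * δ jl ^ 2 := by
    have h1 : (1:ℝ) = ∑ k, ‖R jl k‖ ^ 2 := (hrow jl).symm
    have h2 : ∑ k : Fin n, ‖R jl k‖ ^ 2
        ≤ ∑ k : Fin n, (if m - 1 ≤ (k:ℕ) then δ jl ^ 2 else 0) := by
      apply Finset.sum_le_sum
      intro k _
      by_cases hk : m - 1 ≤ (k:ℕ)
      · rw [if_pos hk]
        exact hdom' jl k jl le_rfl hk
      · rw [if_neg hk, htrap jl k (by simp only [hjl]; omega)]
        simp
    have hfilter : ((Finset.range n).filter fun k => m - 1 ≤ k) = Finset.Ico (m-1) n := by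
      ext k
      simp only [Finset.mem_filter, Finset.mem_range, Finset.mem_Ico]
      omega
    have h3 : ∑ k : Fin n, (if m - 1 ≤ (k:ℕ) then δ jl ^ 2 else 0)
        = ((n - (m - 1) : ℕ) : ℝ) * δ jl ^ 2 := by
      rw [Fin.sum_univ_eq_sum_range (fun k => if m - 1 ≤ k then δ jl ^ 2 else 0) n,
        ← Finset.sum_filter, hfilter, Finset.sum_const, Nat.card_Ico, nsmul_eq_mul]
    have h4 : ((n - (m - 1) : ℕ) : ℝ) = (n:ℝ) - m + 1 := by
      rw [Nat.cast_sub (by omega), Nat.cast_sub (by omega)]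
      push_cast
      ring
    rw [h4] at h3
    linarith
  have hδlastpos : 0 < δ jl := by
    rcases lt_or_eq_of_le (hδ0 jl) with h | h
    · exact h
    · exfalso
      rw [← h] at hlast
      norm_num at hlast
  have hδpos : ∀ i, 0 < δ i :=
    fun i => lt_of_lt_of_le hδlastpos (hmono i jl (by simp only [hjl]; omega))
  have hinv : ∀ i : Fin m, 1 / δ i ^ 2 ≤ (n:ℝ) - m + 1 := by
    intro i
    rw [div_le_iff₀ (pow_pos (hδpos i) 2)]
    have hji : δ jl ≤ δ i := hmono i jl (by simp only [hjl]; omega)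
    have hsq : δ jl ^ 2 ≤ δ i ^ 2 := by nlinarith [hδ0 jl]
    have := mul_le_mul_of_nonneg_left hsq hK0
    linarith
  -- triangularity and invertibility
  have htri : T.BlockTriangular id := by
    intro i j hij
    exact htrap i (Fin.castLE hmn j) (by simpa using hij)
  have hTne : ∀ i : Fin m, T i i ≠ 0 := by
    intro i
    rw [← norm_pos_iff, ← hδ i]
    exact hδpos i
  have hdet : T.det ≠ 0 := by
    rw [Matrix.det_of_upperTriangular htri]
    exact Finset.prod_ne_zero_iff.mpr fun i _ => hTne i
  have hUnit : IsUnit T := (Matrix.isUnit_iff_isUnit_det T).mpr (isUnit_iff_ne_zero.mpr hdet)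
  refine ⟨hUnit, ?_⟩
  haveI : Invertible T := T.invertibleOfIsUnitDet (isUnit_iff_ne_zero.mpr hdet)
  set S : Matrix (Fin m) (Fin m) ℂ := T⁻¹ with hSdef
  have hTS : T * S = 1 := Matrix.mul_nonsing_inv T (isUnit_iff_ne_zero.mpr hdet)
  have hStri : S.BlockTriangular id := Matrix.blockTriangular_inv_of_blockTriangular htri
  have hS0 : ∀ i j : Fin m, (j:ℕ) < (i:ℕ) → S i j = 0 := by
    intro i j h
    exact hStri (by simpa using h)
  have heq : ∀ i j : Fin m, ∑ l, T i l * S l j = if i = j then 1 else 0 := by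
    intro i j
    have h := congrFun (congrFun hTS i) j
    rwa [Matrix.mul_apply, Matrix.one_apply] at h
  -- diagonal entries of the inverse
  have hdiagS : ∀ j : Fin m, ‖S j j‖ * δ j = 1 := by
    intro j
    have h := heq j j
    rw [if_pos rfl] at h
    have hsingle : ∑ l, T j l * S l j = T j j * S j j := by
      apply Finset.sum_eq_single j
      · intro l _ hne
        rcases Nat.lt_or_ge (l:ℕ) (j:ℕ) with hl | hl
        · rw [htri (show id l < id j by simpa using hl), zero_mul]
        · have : (j:ℕ) < (l:ℕ) := by
            rcases Nat.eq_or_lt_of_le hl with h' | h'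
            · exact absurd (Fin.ext h'.symm) hne
            · exact h'
          rw [hS0 l j this, mul_zero]
      · intro h'
        exact absurd (Finset.mem_univ j) h'
    rw [hsingle] at h
    rw [hδ, mul_comm, ← norm_mul, h, norm_one]
  -- finite sets for columns
  set F : ℕ → ℕ → Finset (Fin m) :=
    fun a b => Finset.univ.filter (fun l : Fin m => a ≤ (l:ℕ) ∧ (l:ℕ) ≤ b) with hFdef
  have hmemF : ∀ (a b : ℕ) (l : Fin m), l ∈ F a b ↔ (a ≤ (l:ℕ) ∧ (l:ℕ) ≤ b) := by
    intro a b l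
    simp [hFdef]
  have hsum_eq : ∀ i j : Fin m, ∑ l, T i l * S l j = ∑ l ∈ F (i:ℕ) (j:ℕ), T i l * S l j := by
    intro i j
    symm
    apply Finset.sum_subset (Finset.subset_univ _)
    intro l _ hl
    rw [hmemF] at hl
    push_neg at hl
    rcases Nat.lt_or_ge (l:ℕ) (i:ℕ) with h' | h'
    · rw [htri (show id l < id i by simpa using h'), zero_mul]
    · rw [hS0 l j (hl h'), mul_zero]
  have hinsertF : ∀ i j : Fin m, (i:ℕ) ≤ (j:ℕ) →
      F (i:ℕ) (j:ℕ) = insert i (F ((i:ℕ)+1) (j:ℕ)) := by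
    intro i j hij
    ext l
    rw [hmemF, Finset.mem_insert, hmemF]
    constructor
    · intro ⟨h1, h2⟩
      rcases Nat.eq_or_lt_of_le h1 with h' | h'
      · exact Or.inl (Fin.ext h'.symm)
      · exact Or.inr ⟨h', h2⟩
    · rintro (rfl | ⟨h1, h2⟩)
      · exact ⟨le_rfl, hij⟩
      · exact ⟨by omega, h2⟩
  have hnotmemF : ∀ i j : Fin m, i ∉ F ((i:ℕ)+1) (j:ℕ) := by
    intro i j h
    rw [hmemF] at h
    omega
  -- back-substitution entry inequality
  have hentry : ∀ i j : Fin m, (i:ℕ) < (j:ℕ) →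
      ‖S i j‖ ≤ ∑ l ∈ F ((i:ℕ)+1) (j:ℕ), ‖S l j‖ := by
    intro i j hij
    have h := heq i j
    rw [if_neg (fun h' => by rw [h'] at hij; omega)] at h
    rw [hsum_eq, hinsertF i j (le_of_lt hij), Finset.sum_insert (hnotmemF i j)] at h
    have h2 : T i i * S i j = -∑ l ∈ F ((i:ℕ)+1) (j:ℕ), T i l * S l j := by
      linear_combination h
    have h3 : δ i * ‖S i j‖ ≤ δ i * ∑ l ∈ F ((i:ℕ)+1) (j:ℕ), ‖S l j‖ := by
      calc δ i * ‖S i j‖ = ‖T i i * S i j‖ := by rw [norm_mul, hδ]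
        _ = ‖∑ l ∈ F ((i:ℕ)+1) (j:ℕ), T i l * S l j‖ := by rw [h2, norm_neg]
        _ ≤ ∑ l ∈ F ((i:ℕ)+1) (j:ℕ), ‖T i l * S l j‖ := norm_sum_le _ _
        _ ≤ ∑ l ∈ F ((i:ℕ)+1) (j:ℕ), δ i * ‖S l j‖ := by
            apply Finset.sum_le_sum
            intro l hl
            rw [hmemF] at hl
            rw [norm_mul]
            exact mul_le_mul_of_nonneg_right (hTle i l (by omega)) (norm_nonneg _)
        _ = δ i * ∑ l ∈ F ((i:ℕ)+1) (j:ℕ), ‖S l j‖ := by rw [Finset.mul_sum]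
    exact le_of_mul_le_mul_left h3 (hδpos i)
  -- claim A : partial column sums
  have claimA : ∀ (d : ℕ) (i j : Fin m), (i:ℕ) ≤ (j:ℕ) → (j:ℕ) - (i:ℕ) ≤ d →
      (∑ l ∈ F (i:ℕ) (j:ℕ), ‖S l j‖) * δ j ≤ 2 ^ ((j:ℕ) - (i:ℕ)) := by
    intro d
    induction d with
    | zero =>
      intro i j hij hd
      have hij' : i = j := Fin.ext (by omega)
      subst hij'
      have hFi : F (i:ℕ) (i:ℕ) = {i} := by
        ext l
        rw [hmemF, Finset.mem_singleton]
        constructor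
        · intro ⟨h1, h2⟩; exact Fin.ext (by omega)
        · rintro rfl; exact ⟨le_rfl, le_rfl⟩
      rw [hFi, Finset.sum_singleton, hdiagS i, Nat.sub_self, pow_zero]
    | succ d ih =>
      intro i j hij hd
      rcases Nat.eq_or_lt_of_le hij with heq' | hlt
      · exact le_trans (ih i j hij (by omega)) (by norm_num [heq'])
      · have hi1 : (i:ℕ) + 1 < m := by omega
        set i' : Fin m := ⟨(i:ℕ) + 1, hi1⟩ with hi'
        have hii' : (i':ℕ) = (i:ℕ) + 1 := rfl
        have hA' : (∑ l ∈ F ((i:ℕ)+1) (j:ℕ), ‖S l j‖) * δ j ≤ 2 ^ ((j:ℕ) - (i:ℕ) - 1) := by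
          have := ih i' j (by omega) (by omega)
          rw [hii'] at this
          rw [Nat.sub_sub]
          exact this
        have hSij : ‖S i j‖ * δ j ≤ 2 ^ ((j:ℕ) - (i:ℕ) - 1) := by
          refine le_trans (mul_le_mul_of_nonneg_right (hentry i j hlt) (hδ0 j)) hA'
        rw [hinsertF i j hij, Finset.sum_insert (hnotmemF i j), add_mul]
        have hexp : (2:ℝ) ^ ((j:ℕ) - (i:ℕ)) = 2 ^ ((j:ℕ) - (i:ℕ) - 1) + 2 ^ ((j:ℕ) - (i:ℕ) - 1) := by
          rw [← two_mul, ← pow_succ']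
          congr 1
          omega
        rw [hexp]
        exact add_le_add hSij hA'
  -- claim B : entry bounds
  have claimB : ∀ i j : Fin m, (i:ℕ) ≤ (j:ℕ) →
      ‖S i j‖ * δ j ≤ 2 ^ ((j:ℕ) - (i:ℕ) - 1) := by
    intro i j hij
    rcases Nat.eq_or_lt_of_le hij with heq' | hlt
    · have hij' : i = j := Fin.ext heq'
      subst hij'
      rw [hdiagS i]
      norm_num
    · refine le_trans (mul_le_mul_of_nonneg_right (hentry i j hlt) (hδ0 j)) ?_
      have := claimA ((j:ℕ) - (i:ℕ) - 1) ⟨(i:ℕ)+1, by omega⟩ j (by simp; omega) (by simp; omega)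
      refine le_trans (le_of_eq ?_) (le_trans this (le_of_eq ?_))
      · norm_num
      · rw [Nat.sub_sub]
  -- column sums
  have hcol : ∀ j : Fin m, (∑ i, ‖S i j‖ ^ 2) * δ j ^ 2 ≤ ((4:ℝ) ^ (j:ℕ) + 2) / 3 := by
    intro j
    have h1 : (∑ i, ‖S i j‖ ^ 2) * δ j ^ 2
        ≤ ∑ i : Fin m, (if (i:ℕ) ≤ (j:ℕ) then (4:ℝ) ^ ((j:ℕ) - (i:ℕ) - 1) else 0) := by
      rw [Finset.sum_mul]
      apply Finset.sum_le_sum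
      intro i _
      by_cases hij : (i:ℕ) ≤ (j:ℕ)
      · rw [if_pos hij]
        have hB := claimB i j hij
        have hrw : ‖S i j‖ ^ 2 * δ j ^ 2 = (‖S i j‖ * δ j) ^ 2 := by ring
        rw [hrw]
        calc (‖S i j‖ * δ j) ^ 2 ≤ ((2:ℝ) ^ ((j:ℕ) - (i:ℕ) - 1)) ^ 2 := by
              apply pow_le_pow_left₀ (mul_nonneg (norm_nonneg _) (hδ0 j)) hB
          _ = 4 ^ ((j:ℕ) - (i:ℕ) - 1) := by
              rw [← pow_mul, mul_comm, pow_mul]; norm_num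
      · rw [if_neg hij, hS0 i j (by omega)]
        simp
    refine le_trans h1 ?_
    rw [Fin.sum_univ_eq_sum_range (fun i => if i ≤ (j:ℕ) then (4:ℝ) ^ ((j:ℕ) - i - 1) else 0) m]
    have hsub : Finset.range ((j:ℕ) + 1) ⊆ Finset.range m := Finset.range_subset_range.mpr j.isLt
    rw [← Finset.sum_subset hsub (fun x _ hx => by
        rw [if_neg]; simp only [Finset.mem_range] at hx ⊢; omega)]
    have h2 : ∑ i ∈ Finset.range ((j:ℕ)+1), (if i ≤ (j:ℕ) then (4:ℝ) ^ ((j:ℕ) - i - 1) else 0)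
        = ∑ i ∈ Finset.range ((j:ℕ)+1), (4:ℝ) ^ ((j:ℕ) - i - 1) := by
      apply Finset.sum_congr rfl
      intro i hi
      rw [if_pos (by simp only [Finset.mem_range] at hi; omega)]
    rw [h2]
    have h3 := Finset.sum_range_reflect (fun d => (4:ℝ) ^ (d - 1)) ((j:ℕ)+1)
    simp only [Nat.add_sub_cancel] at h3
    rw [h3, aux_sum_four (j:ℕ)]
  -- total Frobenius bound
  have htotal : ∑ i, ∑ j, ‖S i j‖ ^ 2
      ≤ ((n:ℝ) - m + 1) * (((4:ℝ) ^ m + 6 * m - 1) / 9) := by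
    rw [Finset.sum_comm]
    have hstep : ∀ j : Fin m, ∑ i, ‖S i j‖ ^ 2
        ≤ ((n:ℝ) - m + 1) * (((4:ℝ) ^ (j:ℕ) + 2) / 3) := by
      intro j
      have h1 := hcol j
      have h2 := hinv j
      have hpos : (0:ℝ) < δ j ^ 2 := pow_pos (hδpos j) 2
      have h3 : ∑ i, ‖S i j‖ ^ 2 ≤ (((4:ℝ) ^ (j:ℕ) + 2) / 3) * (1 / δ j ^ 2) := by
        rw [← le_div_iff₀ hpos] at h1
        rw [mul_one_div]
        exact h1
      refine le_trans h3 ?_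
      rw [mul_comm ((n:ℝ) - ↑m + 1)]
      exact mul_le_mul_of_nonneg_left h2 (by positivity)
    refine le_trans (Finset.sum_le_sum fun j _ => hstep j) (le_of_eq ?_)
    have hs : ∑ j : Fin m, (((4:ℝ) ^ (j:ℕ) + 2) / 3) = ((4:ℝ) ^ m + 6 * m - 1) / 9 := by
      rw [Fin.sum_univ_eq_sum_range (fun j => ((4:ℝ) ^ j + 2) / 3) m]
      exact aux_sum_col m
    rw [← Finset.mul_sum, hs]
  -- conclusion
  have h4m : (1:ℝ) ≤ 4 ^ m := by
    have := pow_le_pow_left₀ (by norm_num : (0:ℝ) ≤ 1) (by norm_num : (1:ℝ) ≤ 4) m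
    simpa using this
  have hC0 : (0:ℝ) ≤ (4:ℝ) ^ m + 6 * m - 1 := by
    have hm0 : (0:ℝ) ≤ (m:ℝ) := Nat.cast_nonneg m
    linarith
  calc specNorm S ≤ Real.sqrt (∑ i, ∑ j, ‖S i j‖ ^ 2) := specNorm_le_frob S
    _ ≤ Real.sqrt (((n:ℝ) - m + 1) * (((4:ℝ) ^ m + 6 * m - 1) / 9)) := Real.sqrt_le_sqrt htotal
    _ = Real.sqrt ((n:ℝ) - m + 1) * (Real.sqrt ((4:ℝ) ^ m + 6 * m - 1) / 3) := by
        rw [Real.sqrt_mul hK0, Real.sqrt_div hC0]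
        congr 2
        rw [show (9:ℝ) = 3 ^ 2 by norm_num, Real.sqrt_sq (by norm_num : (0:ℝ) ≤ 3)]
end

section
/- Let W ∈ ℂ^{m×n} and suppose W = Q · [[R₁₁, R₁₂], [0, R₂₂]], where Q ∈ ℂ^{m×m} is unitary, R₁₁ ∈ ℂ^{k×k} is invertible, R₁₂ ∈ ℂ^{k×(n−k)}, and R₂₂ ∈ ℂ^{(m−k)×(n−k)}. Partition the Gram matrix H = W*W conformally as H = [[H₁₁, H₁₂], [H₂₁, H₂₂]] with H₁₁ ∈ ℂ^{k×k}. Then R₂₂*R₂₂ equals the Schur complement of H₁₁ in H: R₂₂*R₂₂ = H₂₂ − H₂₁H₁₁⁻¹H₁₂. In particular, the Gram matrix of the trailing block after k steps of Householder QR depends on W only through H = W*W, so QR with column pivoting on W and on Ω*W (Ω unitary) selects the same columns. -/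
open Matrix

/-- After `k` steps of (Householder) QR, the Gram matrix of the trailing block
equals the Schur complement of `H₁₁` in the Gram matrix `H = W*W`:
`R₂₂*R₂₂ = H₂₂ − H₂₁H₁₁⁻¹H₁₂`. -/
theorem trailing_block_gram_eq_schur_complement {k m n : ℕ} (hkm : k ≤ m) (hkn : k ≤ n)
    (W : Matrix (Fin k ⊕ Fin (m - k)) (Fin k ⊕ Fin (n - k)) ℂ)
    (Q : Matrix (Fin k ⊕ Fin (m - k)) (Fin k ⊕ Fin (m - k)) ℂ) (hQ : Qᴴ * Q = 1)
    (R11 : Matrix (Fin k) (Fin k) ℂ) (hR11 : IsUnit R11)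
    (R12 : Matrix (Fin k) (Fin (n - k)) ℂ)
    (R22 : Matrix (Fin (m - k)) (Fin (n - k)) ℂ)
    (hW : W = Q * Matrix.fromBlocks R11 R12 0 R22) :
    R22ᴴ * R22 =
      (Wᴴ * W).toBlocks₂₂ -
        (Wᴴ * W).toBlocks₂₁ * ((Wᴴ * W).toBlocks₁₁)⁻¹ * (Wᴴ * W).toBlocks₁₂ := by
  set R := Matrix.fromBlocks R11 R12 0 R22 with hR
  have hWW : Wᴴ * W = Rᴴ * R := by
    rw [hW, conjTranspose_mul, Matrix.mul_assoc, ← Matrix.mul_assoc Qᴴ, hQ, Matrix.one_mul]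
  have hRR : Rᴴ * R = Matrix.fromBlocks (R11ᴴ * R11) (R11ᴴ * R12)
      (R12ᴴ * R11) (R12ᴴ * R12 + R22ᴴ * R22) := by
    rw [hR, fromBlocks_conjTranspose, fromBlocks_multiply]
    simp [Matrix.mul_assoc]
  rw [hWW, hRR]
  simp only [toBlocks_fromBlocks₁₁, toBlocks_fromBlocks₁₂, toBlocks_fromBlocks₂₁,
    toBlocks_fromBlocks₂₂]
  have hdet : IsUnit R11.det := (Matrix.isUnit_iff_isUnit_det _).mp hR11
  have hdet' : IsUnit R11ᴴ.det := by rw [Matrix.det_conjTranspose]; exact hdet.star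
  have hinv : (R11ᴴ * R11)⁻¹ = R11⁻¹ * (R11ᴴ)⁻¹ := Matrix.mul_inv_rev _ _
  rw [hinv]
  have h1 : R12ᴴ * R11 * (R11⁻¹ * R11ᴴ⁻¹) * (R11ᴴ * R12) = R12ᴴ * R12 := by
    rw [← Matrix.mul_assoc (R12ᴴ * R11), Matrix.mul_assoc R12ᴴ,
      Matrix.mul_nonsing_inv _ hdet, Matrix.mul_one,
      Matrix.mul_assoc R12ᴴ, ← Matrix.mul_assoc R11ᴴ⁻¹,
      Matrix.nonsing_inv_mul _ hdet', Matrix.one_mul]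
  rw [h1]
  abel
end
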